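/- arXiv:1812.08992 — 5 statements merged into one kernel-verified Lean document; each statement's English description precedes it below -/
import Mathlib

section
/- Let P(∂) be an ℓ×k matrix with entries in A = ℂ[∂₁,…,∂ₙ] whose rows generate the submodule P ⊆ A^k, and suppose the ideal 𝔦_ℓ ⊆ A generated by the ℓ×ℓ minors of P(∂) is nonzero (so ℓ ≤ k). Then the A-module A^k/P is torsion-free if and only if the height of 𝔦_ℓ is at least 2 (by convention the unit ideal has height ⊤). -/
noncomputable section

/-- The height of an ideal `I`: the infimum of the heights of the prime ideals minimal
over `I` (so the unit ideal, having no minimal primes, has height `⊤`). -/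
noncomputable def idealHeight {R : Type*} [CommRing R] (I : Ideal R) : ℕ∞ :=
  ⨅ p : {q : PrimeSpectrum R // q.asIdeal ∈ I.minimalPrimes}, Order.height p.1

/-- The ideal generated by the `ℓ × ℓ` minors of an `ℓ × k` matrix. -/
def minorsIdeal {R : Type*} [CommRing R] {ℓ k : ℕ}
    (M : Matrix (Fin ℓ) (Fin k) R) : Ideal R :=
  Ideal.span {x | ∃ g : Fin ℓ ↪ Fin k, x = (M.submatrix id g).det}

section Aux

variable {R : Type*} [CommRing R] [IsDomain R] [UniqueFactorizationMonoid R]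

/-- A nonzero prime ideal in a UFD contains a prime element. -/
lemma exists_prime_mem_of_ne_bot {q : Ideal R} (hq : q.IsPrime) (hbot : q ≠ ⊥) :
    ∃ f : R, Prime f ∧ f ∈ q := by
  obtain ⟨a, haq, ha0⟩ := Submodule.exists_mem_ne_zero_of_ne_bot hbot
  obtain ⟨s, hsp, hsa⟩ := UniqueFactorizationMonoid.exists_prime_factors a ha0
  obtain ⟨u, hu⟩ := hsa
  have hprod : s.prod ∈ q := by
    rcases hq.mem_or_mem (show s.prod * (u : R) ∈ q from hu ▸ haq) with h | h
    · exact h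
    · exact absurd (q.eq_top_of_isUnit_mem h u.isUnit) hq.ne_top
  obtain ⟨f, hfs, hfq⟩ := (hq.multiset_prod_mem_iff_exists_mem s).mp hprod
  exact ⟨f, hsp f hfs, hfq⟩

/-- In a UFD, a nonzero prime ideal contained in a principal prime is equal to it. -/
lemma eq_span_of_le_span {f : R} (hf : Prime f) {q : Ideal R} (hq : q.IsPrime)
    (hbot : q ≠ ⊥) (hle : q ≤ Ideal.span {f}) : q = Ideal.span {f} := by
  refine le_antisymm hle ?_
  obtain ⟨a, haq, ha0⟩ := Submodule.exists_mem_ne_zero_of_ne_bot hbot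
  obtain ⟨t, u, hfu, hrep⟩ := WfDvdMonoid.max_power_factor ha0 hf.irreducible
  have hu : u ∉ q := fun h => hfu (Ideal.mem_span_singleton.mp (hle h))
  have hft : f ^ t ∈ q := ((hq.mem_or_mem (hrep ▸ haq)).resolve_right hu)
  have ht : t ≠ 0 := by
    rintro rfl
    rw [pow_zero] at hft
    exact hq.ne_top (q.eq_top_of_isUnit_mem hft isUnit_one)
  exact (Ideal.span_singleton_le_iff_mem q).mpr (hq.mem_of_pow_mem t hft)

lemma height_span_prime_le_one {f : R} (hf : Prime f) (hpr : (Ideal.span {f} : Ideal R).IsPrime) :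
    Order.height (⟨Ideal.span {f}, hpr⟩ : PrimeSpectrum R) ≤ 1 := by
  have : ((1 : ℕ) : ℕ∞) = 1 := by norm_num
  rw [← this, Order.height_le_coe_iff]
  intro y hy
  have hyb : y.asIdeal = ⊥ := by
    by_contra hb
    have := eq_span_of_le_span hf y.isPrime hb (le_of_lt hy)
    exact absurd (PrimeSpectrum.ext this) (ne_of_lt hy)
  have : IsMin y := by
    intro z hz
    have : z.asIdeal ≤ y.asIdeal := hz
    have hzb : z.asIdeal = ⊥ := le_bot_iff.mp (hyb ▸ this)
    exact le_of_eq (PrimeSpectrum.ext (hyb ▸ hzb.symm ▸ rfl))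
  rw [Order.height_eq_zero.mpr this]
  norm_num

set_option maxHeartbeats 800000 in
lemma idealHeight_le_one_of_minors_le {ℓ k : ℕ} {M : Matrix (Fin ℓ) (Fin k) R}
    (hne : minorsIdeal M ≠ ⊥) {f : R} (hf : Prime f)
    (hsub : minorsIdeal M ≤ Ideal.span {f}) :
    idealHeight (minorsIdeal M) ≤ 1 := by
  have hpr : (Ideal.span {f} : Ideal R).IsPrime :=
    (Ideal.span_singleton_prime hf.ne_zero).mpr hf
  haveI := hpr
  obtain ⟨q, hqmin, hqle⟩ := Ideal.exists_minimalPrimes_le (J := Ideal.span {f}) hsub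
  have hqp : q.IsPrime := hqmin.1.1
  have hqbot : q ≠ ⊥ := by
    rintro rfl
    exact hne (le_bot_iff.mp hqmin.1.2)
  have hqeq : q = Ideal.span {f} := eq_span_of_le_span hf hqp hqbot hqle
  have hmem : (⟨Ideal.span {f}, hpr⟩ : PrimeSpectrum R).asIdeal ∈
      (minorsIdeal M).minimalPrimes := by
    exact hqeq ▸ hqmin
  have h := iInf_le (fun p : {q : PrimeSpectrum R //
      q.asIdeal ∈ (minorsIdeal M).minimalPrimes} => Order.height p.1)
      ⟨⟨Ideal.span {f}, hpr⟩, hmem⟩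
  exact le_trans h (height_span_prime_le_one hf hpr)

open Matrix in
lemma torsion_of_minors_le {R : Type*} [CommRing R] [IsDomain R]
    [UniqueFactorizationMonoid R] {ℓ k : ℕ} (hl : 0 < ℓ)
    {f : R} (hf : Prime f) (M : Matrix (Fin ℓ) (Fin k) R)
    (hne : minorsIdeal M ≠ ⊥) (hsub : minorsIdeal M ≤ Ideal.span {f}) :
    ∃ (v : Fin k → R) (p : R), p ≠ 0 ∧
      p • v ∈ Submodule.span R (Set.range fun i j => M i j) ∧
      v ∉ Submodule.span R (Set.range fun i j => M i j) := by
  classical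
  set P := Submodule.span R (Set.range fun i j => M i j) with hP
  -- all minors divisible by f
  have hΦf : ∀ g : Fin ℓ ↪ Fin k, f ∣ (M.submatrix id g).det := fun g =>
    Ideal.mem_span_singleton.mp (hsub (Ideal.subset_span ⟨g, rfl⟩))
  -- a nonzero minor exists
  have hex : ∃ g : Fin ℓ ↪ Fin k, (M.submatrix id g).det ≠ 0 := by
    by_contra hc
    push_neg at hc
    refine hne (le_bot_iff.mp (Ideal.span_le.mpr ?_))
    rintro x ⟨g, rfl⟩
    simpa using hc g
  obtain ⟨g₁, hg₁⟩ := hex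
  -- max power factorizations of the nonzero minors
  have key : ∀ g : {g : Fin ℓ ↪ Fin k // (M.submatrix id g.1).det ≠ 0},
      ∃ (t : ℕ) (u : R), ¬ f ∣ u ∧ (M.submatrix id g.1).det = f ^ t * u :=
    fun g => WfDvdMonoid.max_power_factor g.2 hf.irreducible
  choose tt uu hfu hrep using key
  haveI : Nonempty {g : Fin ℓ ↪ Fin k // (M.submatrix id g.1).det ≠ 0} := ⟨⟨g₁, hg₁⟩⟩
  obtain ⟨g₀, -, hg₀⟩ := Finset.exists_mem_eq_inf' (Finset.univ_nonempty
    (α := {g : Fin ℓ ↪ Fin k // (M.submatrix id g.1).det ≠ 0})) tt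
  set t₀ := tt g₀ with ht₀
  have hmin : ∀ g, t₀ ≤ tt g := fun g => hg₀ ▸ Finset.inf'_le tt (Finset.mem_univ g)
  -- every tt is positive
  have htpos : ∀ g, 1 ≤ tt g := by
    intro g
    by_contra hcon
    have h0 : tt g = 0 := by omega
    have := hrep g
    rw [h0, pow_zero, one_mul] at this
    exact hfu g (this ▸ hΦf g.1)
  have ht1 : 1 ≤ t₀ := htpos g₀
  -- f ^ t₀ divides every minor
  have hdvd_all : ∀ g : Fin ℓ ↪ Fin k, f ^ t₀ ∣ (M.submatrix id g).det := by
    intro g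
    by_cases h : (M.submatrix id g).det = 0
    · simp [h]
    · rw [hrep ⟨g, h⟩]
      exact Dvd.dvd.mul_right (pow_dvd_pow f (hmin ⟨g, h⟩)) _
  set B := M.submatrix id (g₀.1 : Fin ℓ ↪ Fin k) with hB
  set W := B.adjugate * M with hW
  -- entries of W are (up to sign) minors, hence divisible by f ^ t₀
  have hWdvd : ∀ i j, f ^ t₀ ∣ W i j := by
    intro i j
    have h1 : W i j = (B.updateCol i (fun r => M r j)).det := by
      have h2 : W i j = (B.adjugate *ᵥ fun r => M r j) i := by
        simp [hW, Matrix.mul_apply, Matrix.mulVec, dotProduct]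
      rw [h2, ← Matrix.cramer_eq_adjugate_mulVec, Matrix.cramer_apply]
    set hfun : Fin ℓ → Fin k := Function.update (⇑(g₀.1)) i j with hhfun
    have h3 : B.updateCol i (fun r => M r j) = M.submatrix id hfun := by
      ext r c
      by_cases hc : c = i
      · subst hc
        simp [Matrix.updateCol_apply, hhfun]
      · simp [Matrix.updateCol_apply, hc, hhfun, Function.update_of_ne hc, hB]
    rw [h1, h3]
    by_cases hinj : Function.Injective hfun
    · exact hdvd_all ⟨hfun, hinj⟩
    · rw [Function.not_injective_iff] at hinj
      obtain ⟨c, c', hcc, hne'⟩ := hinj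
      have : (M.submatrix id hfun).det = 0 := by
        refine Matrix.det_zero_of_column_eq hne' ?_
        intro r
        simp [Matrix.submatrix_apply, hcc]
      simp [this]
  choose N hN using hWdvd
  -- rows of W are in P
  have hWrow : ∀ i, (fun j => W i j) ∈ P := by
    intro i
    rw [hP]
    refine (Submodule.mem_span_range_iff_exists_fun R).mpr ⟨fun r => B.adjugate i r, ?_⟩
    funext j
    simp [Matrix.mul_apply, hW]
  by_contra hcon
  push_neg at hcon
  -- all rows of N are in P
  have hNrow : ∀ i, (fun j => N i j) ∈ P := by
    intro i
    refine hcon _ (f ^ t₀) (pow_ne_zero _ hf.ne_zero) ?_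
    have : f ^ t₀ • (fun j => N i j) = fun j => W i j := by
      funext j
      simp [hN i j, smul_eq_mul]
    rw [this]
    exact hWrow i
  have hNrep := fun i => (Submodule.mem_span_range_iff_exists_fun R).mp (hNrow i)
  choose C hC using hNrep
  -- f ^ t₀ • C equals the adjugate of B
  have hkey : (f ^ t₀ • Matrix.of C) * M = B.adjugate * M := by
    ext i j
    have h4 : ∑ r, C i r * M r j = N i j := by
      have := congrFun (hC i) j
      simpa [Finset.sum_apply] using this
    calc ((f ^ t₀ • Matrix.of C) * M) i j = ∑ r, (f ^ t₀ * C i r) * M r j := by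
          simp [Matrix.mul_apply, Matrix.smul_apply, smul_eq_mul]
      _ = f ^ t₀ * ∑ r, C i r * M r j := by
          rw [Finset.mul_sum]; congr 1; funext r; ring
      _ = f ^ t₀ * N i j := by rw [h4]
      _ = W i j := (hN i j).symm
      _ = (B.adjugate * M) i j := by rw [hW]
  set D := f ^ t₀ • Matrix.of C - B.adjugate with hD
  have hDM : D * M = 0 := by
    rw [hD, Matrix.sub_mul, hkey, sub_self]
  have hDB : D * B = 0 := by
    ext i c
    have := congrFun (congrFun hDM i) (g₀.1 c)
    simpa [Matrix.mul_apply, hB, Matrix.submatrix_apply] using this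
  have hD0 : D = 0 := by
    have h5 : B.det • D = 0 := by
      have : D * (B * B.adjugate) = 0 := by
        rw [← Matrix.mul_assoc, hDB, Matrix.zero_mul]
      rwa [Matrix.mul_adjugate, Matrix.mul_smul, Matrix.mul_one] at this
    ext i j
    have := congrFun (congrFun h5 i) j
    simp only [Matrix.smul_apply, smul_eq_mul, Matrix.zero_apply] at this ⊢
    exact (mul_eq_zero.mp this).resolve_left g₀.2
  have hadj : f ^ t₀ • Matrix.of C = B.adjugate := by
    have := sub_eq_zero.mp (hD ▸ hD0)
    exact this
  -- take determinants
  have hdet : (f ^ t₀) ^ ℓ * (Matrix.of C).det = B.det ^ (ℓ - 1) := by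
    have := congrArg Matrix.det hadj
    rwa [Matrix.det_smul, Matrix.det_adjugate, Fintype.card_fin] at this
  rw [hrep g₀] at hdet
  have hlm : ℓ - 1 + 1 = ℓ := Nat.succ_pred_eq_of_pos hl
  have hexp : (f ^ t₀) ^ ℓ = f ^ (t₀ * (ℓ - 1)) * f ^ t₀ := by
    rw [← pow_mul, ← pow_add]
    congr 1
    calc t₀ * ℓ = t₀ * (ℓ - 1 + 1) := by rw [hlm]
      _ = t₀ * (ℓ - 1) + t₀ := by ring
  have hrhs : (f ^ t₀ * uu g₀) ^ (ℓ - 1) = f ^ (t₀ * (ℓ - 1)) * uu g₀ ^ (ℓ - 1) := by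
    rw [mul_pow, ← pow_mul]
  rw [hexp, hrhs, mul_assoc] at hdet
  have hcancel : f ^ t₀ * (Matrix.of C).det = uu g₀ ^ (ℓ - 1) :=
    mul_left_cancel₀ (pow_ne_zero _ hf.ne_zero) hdet
  have hfdvd : f ∣ uu g₀ ^ (ℓ - 1) :=
    hcancel ▸ (Dvd.dvd.mul_right (dvd_pow_self f (by omega : t₀ ≠ 0)) _)
  exact hfu g₀ (hf.dvd_of_dvd_pow hfdvd)

lemma mem_span_of_smul_mem {R : Type*} [CommRing R] [IsDomain R]
    [UniqueFactorizationMonoid R] {ℓ k : ℕ} (M : Matrix (Fin ℓ) (Fin k) R)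
    (hnf : ∀ f : R, Prime f → ¬ (minorsIdeal M ≤ Ideal.span {f}))
    {p : R} (hp : p ≠ 0) {v : Fin k → R}
    (hv : p • v ∈ Submodule.span R (Set.range fun i j => M i j)) :
    v ∈ Submodule.span R (Set.range fun i j => M i j) := by
  classical
  obtain ⟨a, ha⟩ := (Submodule.mem_span_range_iff_exists_fun R).mp hv
  have haj : ∀ j, ∑ i, a i * M i j = p * v j := by
    intro j
    simpa [Finset.sum_apply] using congrFun ha j
  set K := FractionRing R with hK
  set φ := algebraMap R K with hφdef
  have hφ : Function.Injective φ := IsFractionRing.injective R K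
  have hφne : ∀ x : R, x ≠ 0 → φ x ≠ 0 := fun x hx h =>
    hx (hφ (h.trans (map_zero φ).symm))
  choose a' p' d hrel hda hdp using fun i =>
    UniqueFactorizationMonoid.exists_reduced_factors' (a i) p hp
  have hp' : ∀ i, p' i ≠ 0 := fun i h => hp (by rw [← hdp i, h, mul_zero])
  set c : Fin ℓ → K := fun i => φ (a' i) / φ (p' i) with hc
  have hcq : ∀ i, φ (p' i) * c i = φ (a' i) := by
    intro i
    rw [hc, mul_comm, div_mul_cancel₀ _ (hφne _ (hp' i))]
  -- the row relation over the fraction field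
  have hsum : ∀ j, ∑ i, c i * φ (M i j) = φ (v j) := by
    intro j
    have h1 : φ p * ∑ i, c i * φ (M i j) = φ p * φ (v j) := by
      rw [Finset.mul_sum]
      have h2 : ∀ i, φ p * (c i * φ (M i j)) = φ (a i) * φ (M i j) := by
        intro i
        have h3 : φ p = φ (d i) * φ (p' i) := by rw [← map_mul, hdp i]
        calc φ p * (c i * φ (M i j))
            = φ (d i) * (φ (p' i) * c i) * φ (M i j) := by rw [h3]; ring
          _ = φ (d i) * φ (a' i) * φ (M i j) := by rw [hcq i]
          _ = φ (a i) * φ (M i j) := by rw [← map_mul, hda i]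
      calc ∑ i, φ p * (c i * φ (M i j)) = ∑ i, φ (a i) * φ (M i j) :=
            Finset.sum_congr rfl fun i _ => h2 i
        _ = φ (∑ i, a i * M i j) := by rw [map_sum]; simp [map_mul]
        _ = φ (p * v j) := by rw [haj j]
        _ = φ p * φ (v j) := map_mul φ _ _
    exact mul_left_cancel₀ (hφne p hp) h1
  -- Cramer: p' i divides every minor times a' i
  have hdvdmul : ∀ (i : Fin ℓ) (g : Fin ℓ ↪ Fin k),
      p' i ∣ (M.submatrix id g).det * a' i := by
    intro i g
    set Bg := M.submatrix id g with hBg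
    set BK := Bg.map φ with hBK
    have hrow : ∀ jc : Fin ℓ, ∑ i', c i' * BK i' jc = φ (v (g jc)) := by
      intro jc
      simpa [hBK, hBg, Matrix.map_apply, Matrix.submatrix_apply] using hsum (g jc)
    set w : R := ∑ jc, v (g jc) * Bg.adjugate jc i with hw
    have hkey : BK.det * c i = φ w := by
      have e1 : Matrix.vecMul (Matrix.vecMul c BK) BK.adjugate
          = Matrix.vecMul c (BK * BK.adjugate) := by
        rw [Matrix.vecMul_vecMul]
      have e2 : BK * BK.adjugate = BK.det • 1 := Matrix.mul_adjugate _
      have e3 : Matrix.vecMul c (BK.det • 1) i = BK.det * c i := by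
        simp [Matrix.vecMul, dotProduct, Matrix.smul_apply, Matrix.one_apply,
          mul_ite, mul_zero, Finset.sum_ite_eq', mul_comm]
      have e4 : Matrix.vecMul (Matrix.vecMul c BK) BK.adjugate i = φ w := by
        have e5 : Matrix.vecMul c BK = fun jc => φ (v (g jc)) := by
          funext jc
          simpa [Matrix.vecMul, dotProduct] using hrow jc
        rw [e5, hw]
        have e6 : BK.adjugate = Bg.adjugate.map φ := by
          rw [hBK, ← RingHom.mapMatrix_apply, ← RingHom.map_adjugate,
            RingHom.mapMatrix_apply]
        rw [e6, map_sum]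
        simp [Matrix.vecMul, dotProduct, Matrix.map_apply, map_mul]
      rw [← e4, e1, e2, e3]
    have h7 : φ (Bg.det * a' i) = φ (w * p' i) := by
      have h8 : φ (p' i) * (BK.det * c i) = φ (p' i) * φ w := by rw [hkey]
      have h9 : BK.det = φ Bg.det := by
        rw [hBK, ← RingHom.mapMatrix_apply]
        exact (RingHom.map_det φ Bg).symm
      rw [h9] at h8
      calc φ (Bg.det * a' i) = φ Bg.det * φ (a' i) := map_mul φ _ _
        _ = φ Bg.det * (φ (p' i) * c i) := by rw [hcq i]
        _ = φ (p' i) * (φ Bg.det * c i) := by ring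
        _ = φ (p' i) * φ w := h8
        _ = φ (w * p' i) := by rw [map_mul]; ring
    have h10 : Bg.det * a' i = w * p' i := hφ h7
    exact ⟨w, h10.trans (mul_comm _ _)⟩
  have hdvd : ∀ (i : Fin ℓ) (g : Fin ℓ ↪ Fin k), p' i ∣ (M.submatrix id g).det :=
    fun i g => (hrel i).symm.dvd_of_dvd_mul_right (hdvdmul i g)
  have hunit : ∀ i, IsUnit (p' i) := by
    intro i
    by_contra hiu
    obtain ⟨q, hqirr, hqdvd⟩ := WfDvdMonoid.exists_irreducible_factor hiu (hp' i)
    refine hnf q (UniqueFactorizationMonoid.irreducible_iff_prime.mp hqirr) ?_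
    rw [minorsIdeal, Ideal.span_le]
    rintro x ⟨g, rfl⟩
    exact Ideal.mem_span_singleton.mpr (dvd_trans hqdvd (hdvd i g))
  set e : Fin ℓ → R := fun i => a' i * ↑(hunit i).unit⁻¹ with he
  have hce : ∀ i, φ (e i) = c i := by
    intro i
    have hinv : p' i * ↑(hunit i).unit⁻¹ = 1 := by
      nth_rewrite 1 [← (hunit i).unit_spec]
      exact Units.mul_inv _
    have h1 : φ (p' i) * φ (e i) = φ (p' i) * c i := by
      rw [hcq i, ← map_mul]
      congr 1
      calc p' i * (a' i * ↑(hunit i).unit⁻¹)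
          = a' i * (p' i * ↑(hunit i).unit⁻¹) := by ring
        _ = a' i := by rw [hinv, mul_one]
    exact mul_left_cancel₀ (hφne _ (hp' i)) h1
  refine (Submodule.mem_span_range_iff_exists_fun R).mpr ⟨e, ?_⟩
  funext j
  apply hφ
  have : ∑ i, e i • (fun j' => M i j') = fun j' => ∑ i, e i * M i j' := by
    funext j'
    simp [Finset.sum_apply]
  rw [this]
  calc φ (∑ i, e i * M i j) = ∑ i, φ (e i) * φ (M i j) := by
        rw [map_sum]; simp [map_mul]
    _ = ∑ i, c i * φ (M i j) := by
        refine Finset.sum_congr rfl fun i _ => ?_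
        rw [hce i]
    _ = φ (v j) := hsum j

end Aux

/-- Suppose the ideal `𝔦_ℓ` of `ℓ × ℓ` minors of the `ℓ × k` matrix `M = P(∂)` over
`A = ℂ[∂₁, …, ∂ₙ]` is nonzero (so `ℓ ≤ k`), and let `P ⊆ A^k` be the submodule generated by
the rows of `M`.  Then `A^k/P` is torsion-free if and only if the height of `𝔦_ℓ` is at
least `2`. -/
theorem torsionFree_iff_minors_height (n k ℓ : ℕ) (hn : 0 < n) (hk : 0 < k) (hl : 0 < ℓ)
    (hlk : ℓ ≤ k)
    (M : Matrix (Fin ℓ) (Fin k) (MvPolynomial (Fin n) ℂ))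
    (hM : minorsIdeal M ≠ ⊥) :
    (∀ p : MvPolynomial (Fin n) ℂ, p ≠ 0 →
        ∀ m : (Fin k → MvPolynomial (Fin n) ℂ) ⧸
            Submodule.span (MvPolynomial (Fin n) ℂ) (Set.range fun i j => M i j),
          p • m = 0 → m = 0) ↔
      2 ≤ idealHeight (minorsIdeal M) := by
  constructor
  · intro htf
    unfold idealHeight
    refine le_iInf fun q => ?_
    by_contra hcon
    push_neg at hcon
    have hle1 : Order.height q.1 ≤ 1 :=
      Order.le_of_lt_add_one ((by norm_num : (2 : ℕ∞) = 1 + 1) ▸ hcon)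
    have hqp : q.1.asIdeal.IsPrime := q.1.isPrime
    have hminors_le : minorsIdeal M ≤ q.1.asIdeal := q.2.1.2
    have hqbot : q.1.asIdeal ≠ ⊥ := fun h => hM (le_bot_iff.mp (h ▸ hminors_le))
    obtain ⟨f, hf, hfq⟩ := exists_prime_mem_of_ne_bot hqp hqbot
    have hpr : (Ideal.span {f} : Ideal (MvPolynomial (Fin n) ℂ)).IsPrime :=
      (Ideal.span_singleton_prime hf.ne_zero).mpr hf
    have hspan_le : Ideal.span {f} ≤ q.1.asIdeal :=
      (Ideal.span_singleton_le_iff_mem _).mpr hfq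
    have heq : Ideal.span {f} = q.1.asIdeal := by
      by_contra hne'
      have hlt : (⟨Ideal.span {f}, hpr⟩ : PrimeSpectrum (MvPolynomial (Fin n) ℂ)) < q.1 := by
        rw [← PrimeSpectrum.asIdeal_lt_asIdeal]
        exact lt_of_le_of_ne hspan_le hne'
      have lt01 : (⟨⊥, Ideal.bot_prime⟩ : PrimeSpectrum (MvPolynomial (Fin n) ℂ))
          < (⟨Ideal.span {f}, hpr⟩ : PrimeSpectrum (MvPolynomial (Fin n) ℂ)) := by
        rw [← PrimeSpectrum.asIdeal_lt_asIdeal]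
        exact lt_of_le_of_ne bot_le
          (fun h => hf.ne_zero (by
            have := h.symm
            rw [Ideal.span_singleton_eq_bot] at this
            exact this))
      set ser : LTSeries (PrimeSpectrum (MvPolynomial (Fin n) ℂ)) := ((RelSeries.singleton {(a, b) : PrimeSpectrum (MvPolynomial (Fin n) ℂ) × PrimeSpectrum (MvPolynomial (Fin n) ℂ) | a < b}
          ⟨⊥, Ideal.bot_prime⟩).snoc ⟨Ideal.span {f}, hpr⟩ lt01).snoc q.1
          (by exact hlt) with hser
      have hlen := Order.length_le_height_last (p := ser)
      have hlast : ser.last = q.1 := RelSeries.last_snoc _ _ _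
      have hlength : ser.length = 2 := rfl
      rw [hlast, hlength] at hlen
      exact absurd hlen (not_le.mpr (by exact_mod_cast hcon))
    obtain ⟨v, pp, hpp0, hpv, hv⟩ :=
      torsion_of_minors_le hl hf M hM (heq ▸ hminors_le)
    have h0 : pp • (Submodule.Quotient.mk v : (Fin k → MvPolynomial (Fin n) ℂ) ⧸
        Submodule.span (MvPolynomial (Fin n) ℂ) (Set.range fun i j => M i j)) = 0 := by
      rw [← Submodule.Quotient.mk_smul]
      exact (Submodule.Quotient.mk_eq_zero _).mpr hpv
    have := htf pp hpp0 (Submodule.Quotient.mk v) h0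
    exact hv ((Submodule.Quotient.mk_eq_zero _).mp this)
  · intro h2 p hp m hpm
    obtain ⟨v, rfl⟩ := Submodule.Quotient.mk_surjective _ m
    have hv : p • v ∈ Submodule.span (MvPolynomial (Fin n) ℂ) (Set.range fun i j => M i j) :=
      (Submodule.Quotient.mk_eq_zero _).mp (by rwa [← Submodule.Quotient.mk_smul] at hpm)
    rw [Submodule.Quotient.mk_eq_zero]
    refine mem_span_of_smul_mem M ?_ hp hv
    intro f hf hle
    have h1 := idealHeight_le_one_of_minors_le hM hf hle
    exact absurd (le_trans h2 h1) (by norm_num)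

end
end

section
/- Suppose ℓ < k. For every d ≥ 0, the set of matrices P(∂) in M_{ℓ,k}(d) for which the A-module A^k/P is torsion-free contains a nonempty Zariski-open subset of M_{ℓ,k}(d); that is, there exists a nonzero polynomial F in N = ℓ·k·(n+d choose n) variables such that for every ℓ×k matrix of degree at most d whose coefficient vector is not a zero of F, the quotient of A^k by the submodule P generated by its rows is torsion-free. -/
noncomputable section

/-- The coefficient of the monomial `m` (of degree at most `d`) in the `(i, j)` entry of the
matrix `M`: the coordinates of `M ∈ M_{ℓ,k}(d)` under the identification of `M_{ℓ,k}(d)` with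
the affine space `ℂ^N`, `N = ℓ·k·(n+d choose n)`. -/
def matrixCoeffs {n ℓ k d : ℕ} (M : Matrix (Fin ℓ) (Fin k) (MvPolynomial (Fin n) ℂ)) :
    Fin ℓ × Fin k × {m : Fin n →₀ ℕ // m.degree ≤ d} → ℂ :=
  fun v => MvPolynomial.coeff v.2.2.1 (M v.1 v.2.1)

namespace GenericTF
open MvPolynomial

private lemma digits_unique {N : ℕ} (b : ℕ) (f g : Fin N → ℕ)
    (hf : ∀ j, f j < b) (hg : ∀ j, g j < b)
    (h : ∑ j, f j * b ^ (j : ℕ) = ∑ j, g j * b ^ (j : ℕ)) : f = g := by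
  induction N with
  | zero => funext j; exact j.elim0
  | succ N ih =>
    have h' : f 0 + b * ∑ j : Fin N, f j.succ * b ^ (j : ℕ)
        = g 0 + b * ∑ j : Fin N, g j.succ * b ^ (j : ℕ) := by
      rw [Fin.sum_univ_succ, Fin.sum_univ_succ] at h
      simpa [Fin.val_succ, pow_succ, Finset.mul_sum, mul_comm, mul_assoc, mul_left_comm] using h
    have hb : 0 < b := lt_of_le_of_lt (Nat.zero_le _) (hf 0)
    have h0 : f 0 = g 0 := by
      have := congrArg (· % b) h'
      simpa [Nat.add_mul_mod_self_left, Nat.mod_eq_of_lt (hf 0), Nat.mod_eq_of_lt (hg 0)] using this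
    have htail : (fun j : Fin N => f j.succ) = fun j => g j.succ := by
      refine ih _ _ (fun j => hf j.succ) (fun j => hg j.succ) ?_
      have h2 : b * ∑ j : Fin N, f j.succ * b ^ (j : ℕ)
          = b * ∑ j : Fin N, g j.succ * b ^ (j : ℕ) := by omega
      exact Nat.eq_of_mul_eq_mul_left hb h2
    funext j
    induction j using Fin.cases with
    | zero => exact h0
    | succ i => exact congrFun htail i

private def kb (ℓ d : ℕ) : ℕ := ℓ * d + 1
private def kD (n ℓ d : ℕ) : ℕ := ℓ * d * kb ℓ d ^ (n - 1)
private def kw (n ℓ d : ℕ) (m : Fin n →₀ ℕ) : ℕ := ∑ j : Fin n, m j * kb ℓ d ^ (j : ℕ)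

private def phi (S : Type*) [CommSemiring S] (n ℓ d : ℕ) :
    MvPolynomial (Fin n) S →+* Polynomial S :=
  MvPolynomial.eval₂Hom Polynomial.C (fun j => Polynomial.X ^ kb ℓ d ^ (j : ℕ))

private lemma phi_apply {S : Type*} [CommSemiring S] (n ℓ d : ℕ) (p : MvPolynomial (Fin n) S) :
    phi S n ℓ d p = ∑ m ∈ p.support, Polynomial.C (coeff m p) * Polynomial.X ^ kw n ℓ d m := by
  have h1 : ∀ m : Fin n →₀ ℕ,
      (∏ i ∈ m.support, (Polynomial.X (R := S) ^ kb ℓ d ^ (i : ℕ)) ^ m i)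
        = Polynomial.X ^ kw n ℓ d m := by
    intro m
    calc ∏ i ∈ m.support, (Polynomial.X (R := S) ^ kb ℓ d ^ (i : ℕ)) ^ m i
        = ∏ i ∈ m.support, Polynomial.X (R := S) ^ (m i * kb ℓ d ^ (i : ℕ)) := by
          refine Finset.prod_congr rfl fun i _ => ?_
          rw [← pow_mul, mul_comm]
      _ = Polynomial.X ^ ∑ i ∈ m.support, m i * kb ℓ d ^ (i : ℕ) :=
          Finset.prod_pow_eq_pow_sum _ _ _
      _ = Polynomial.X ^ kw n ℓ d m := by
          rw [kw]
          congr 1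
          refine Finset.sum_subset (Finset.subset_univ _) fun j _ hj => ?_
          rw [Finsupp.notMem_support_iff.mp hj, zero_mul]
  simp only [phi, MvPolynomial.coe_eval₂Hom]
  rw [MvPolynomial.eval₂_eq]
  exact Finset.sum_congr rfl fun m _ => by rw [h1]

private lemma degree_eq_sum' {n : ℕ} (m : Fin n →₀ ℕ) :
    m.degree = m.sum fun _ e => e := by
  rw [Finsupp.degree, Finsupp.sum]
  rfl

private lemma degree_eq_sum_univ {n : ℕ} (m : Fin n →₀ ℕ) :
    m.degree = ∑ j : Fin n, m j := by
  rw [Finsupp.degree]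
  exact Finset.sum_subset (Finset.subset_univ _) fun j _ hj => Finsupp.notMem_support_iff.mp hj

private lemma kw_le {n ℓ d : ℕ} {m : Fin n →₀ ℕ} (hm : m.degree ≤ ℓ * d) :
    kw n ℓ d m ≤ kD n ℓ d := by
  have hb : 1 ≤ kb ℓ d := Nat.succ_le_succ (Nat.zero_le _)
  calc kw n ℓ d m ≤ ∑ j : Fin n, m j * kb ℓ d ^ (n - 1) :=
        Finset.sum_le_sum fun j _ =>
          Nat.mul_le_mul_left _ (Nat.pow_le_pow_right hb (Nat.le_pred_of_lt j.isLt))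
    _ = (∑ j : Fin n, m j) * kb ℓ d ^ (n - 1) := (Finset.sum_mul _ _ _).symm
    _ ≤ ℓ * d * kb ℓ d ^ (n - 1) :=
        Nat.mul_le_mul_right _ (by rw [← degree_eq_sum_univ]; exact hm)
    _ = kD n ℓ d := rfl

private lemma kw_inj {n ℓ d : ℕ} {m₁ m₂ : Fin n →₀ ℕ} (h₁ : m₁.degree ≤ ℓ * d)
    (h₂ : m₂.degree ≤ ℓ * d) (h : kw n ℓ d m₁ = kw n ℓ d m₂) : m₁ = m₂ := by
  have key : ∀ m : Fin n →₀ ℕ, m.degree ≤ ℓ * d → ∀ j : Fin n, m j < kb ℓ d := fun m hm j =>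
    lt_of_le_of_lt (le_trans (Finsupp.le_degree j m) hm) (Nat.lt_succ_self _)
  have := digits_unique (kb ℓ d) (fun j => m₁ j) (fun j => m₂ j) (key m₁ h₁) (key m₂ h₂) h
  exact Finsupp.ext fun j => congrFun this j

private lemma support_degree_le {n : ℕ} {S : Type*} [CommSemiring S] {p : MvPolynomial (Fin n) S}
    {e : ℕ} (hp : p.totalDegree ≤ e) {m : Fin n →₀ ℕ} (hm : m ∈ p.support) : m.degree ≤ e := by
  rw [degree_eq_sum']
  exact le_trans (MvPolynomial.le_totalDegree hm) hp

private lemma natDegree_phi_le {n ℓ d : ℕ} {p : MvPolynomial (Fin n) ℂ}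
    (hp : p.totalDegree ≤ ℓ * d) : (phi ℂ n ℓ d p).natDegree ≤ kD n ℓ d := by
  rw [phi_apply]
  refine Polynomial.natDegree_sum_le_of_forall_le _ _ fun m hm => ?_
  refine le_trans (Polynomial.natDegree_C_mul_le _ _) ?_
  rw [Polynomial.natDegree_X_pow]
  exact kw_le (support_degree_le hp hm)

private lemma coeff_phi {n ℓ d : ℕ} {p : MvPolynomial (Fin n) ℂ}
    (hp : p.totalDegree ≤ ℓ * d) {m₀ : Fin n →₀ ℕ} (hm₀ : m₀.degree ≤ ℓ * d) :
    (phi ℂ n ℓ d p).coeff (kw n ℓ d m₀) = coeff m₀ p := by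
  rw [phi_apply, Polynomial.finset_sum_coeff]
  rw [Finset.sum_eq_single m₀ ?_ ?_]
  · simp
  · intro m hm hne
    rw [Polynomial.coeff_C_mul, Polynomial.coeff_X_pow, if_neg, mul_zero]
    intro heq
    exact hne (kw_inj (support_degree_le hp hm) hm₀ heq.symm)
  · intro hm
    rw [MvPolynomial.notMem_support_iff.mp hm, map_zero, zero_mul, Polynomial.coeff_zero]

private lemma isUnit_of_phi {n ℓ d : ℕ} {p : MvPolynomial (Fin n) ℂ}
    (hp : p.totalDegree ≤ ℓ * d) (h : IsUnit (phi ℂ n ℓ d p)) : IsUnit p := by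
  obtain ⟨r, hr, hCr⟩ := Polynomial.isUnit_iff.mp h
  have hp0 : p ≠ 0 := by
    rintro rfl
    rw [map_zero] at hCr
    exact hr.ne_zero (Polynomial.C_eq_zero.mp hCr)
  have hconst : ∀ m ∈ p.support, m = 0 := by
    intro m hm
    by_contra hm0
    have hco : (phi ℂ n ℓ d p).coeff (kw n ℓ d m) = coeff m p :=
      coeff_phi hp (support_degree_le hp hm)
    have hkw : kw n ℓ d m ≠ 0 := by
      obtain ⟨j, hj⟩ : ∃ j, m j ≠ 0 := by
        by_contra hall; push_neg at hall; exact hm0 (Finsupp.ext hall)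
      intro h0
      rw [kw] at h0
      have h3 := Finset.sum_eq_zero_iff.mp h0 j (Finset.mem_univ _)
      have hbpos : 0 < kb ℓ d ^ (j : ℕ) := Nat.pow_pos (Nat.succ_pos _)
      have := Nat.mul_eq_zero.mp h3
      omega
    rw [← hCr, Polynomial.coeff_C, if_neg hkw] at hco
    exact (MvPolynomial.mem_support_iff.mp hm) hco.symm
  have hpc : p = MvPolynomial.C (coeff 0 p) := by
    apply MvPolynomial.ext
    intro m
    rw [MvPolynomial.coeff_C]
    by_cases h0 : m = 0
    · rw [if_pos h0.symm, h0]
    · rw [if_neg fun he => h0 he.symm]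
      by_contra hc
      exact h0 (hconst m (MvPolynomial.mem_support_iff.mpr hc))
  have hc0 : coeff 0 p ≠ 0 := by
    intro hc
    rw [hc, map_zero] at hpc
    exact hp0 hpc
  rw [hpc]
  exact (isUnit_iff_ne_zero.mpr hc0).map MvPolynomial.C


private lemma degree_eq_sum'' {n : ℕ} (m : Fin n →₀ ℕ) :
    m.degree = m.sum fun _ e => e := by
  rw [Finsupp.degree, Finsupp.sum]
  rfl

private lemma homogeneousComponent_totalDegree_ne_zero {n : ℕ} {p : MvPolynomial (Fin n) ℂ}
    (hp : p ≠ 0) : homogeneousComponent p.totalDegree p ≠ 0 := by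
  have hne : p.support.Nonempty :=
    Finset.nonempty_iff_ne_empty.mpr (fun h => hp (MvPolynomial.support_eq_empty.mp h))
  obtain ⟨m, hm, hdeg⟩ := Finset.exists_mem_eq_sup p.support hne (fun m => m.sum fun _ e => e)
  intro h0
  have h1 : coeff m (homogeneousComponent p.totalDegree p) = coeff m p := by
    rw [coeff_homogeneousComponent, if_pos]
    rw [degree_eq_sum'', MvPolynomial.totalDegree, hdeg]
  rw [h0] at h1
  simp only [coeff_zero] at h1
  exact MvPolynomial.mem_support_iff.mp hm h1.symm

private lemma le_totalDegree_mul {n : ℕ} {p q : MvPolynomial (Fin n) ℂ} (hp : p ≠ 0)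
    (hq : q ≠ 0) : p.totalDegree + q.totalDegree ≤ (p * q).totalDegree := by
  set a := p.totalDegree with ha
  set b := q.totalDegree with hb
  have hcomp : homogeneousComponent (a + b) (p * q)
      = homogeneousComponent a p * homogeneousComponent b q := by
    conv_lhs => rw [← sum_homogeneousComponent p, ← sum_homogeneousComponent q]
    rw [Finset.sum_mul_sum]
    rw [map_sum]
    have step : ∀ c ∈ Finset.range (p.totalDegree + 1), ∀ e ∈ Finset.range (q.totalDegree + 1),
        homogeneousComponent (a + b) (homogeneousComponent c p * homogeneousComponent e q)
          = if a + b = c + e then homogeneousComponent c p * homogeneousComponent e q else 0 := by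
      intro c _ e _
      exact homogeneousComponent_of_mem ((mem_homogeneousSubmodule _ _).mpr
        ((homogeneousComponent_isHomogeneous c p).mul (homogeneousComponent_isHomogeneous e q)))
    rw [Finset.sum_congr rfl fun c hc => by
      rw [map_sum, Finset.sum_congr rfl fun e he => step c hc e he]]
    rw [Finset.sum_eq_single a ?_ ?_]
    · rw [Finset.sum_eq_single b ?_ ?_]
      · rw [if_pos rfl]
      · intro e he hne
        rw [if_neg (by omega)]
      · intro hmem
        exact absurd (Finset.mem_range.mpr (by omega)) hmem
    · intro c hc hne
      refine Finset.sum_eq_zero fun e he => ?_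
      rw [Finset.mem_range] at he
      rw [Finset.mem_range] at hc
      rw [if_neg (by omega)]
    · intro hmem
      exact absurd (Finset.mem_range.mpr (by omega)) hmem
  by_contra hcon
  push_neg at hcon
  have hz := homogeneousComponent_eq_zero (φ := p * q) (n := a + b) hcon
  rw [hcomp] at hz
  exact mul_ne_zero (homogeneousComponent_totalDegree_ne_zero hp)
    (homogeneousComponent_totalDegree_ne_zero hq) hz

private lemma totalDegree_le_of_dvd {n : ℕ} {q g : MvPolynomial (Fin n) ℂ} (h : q ∣ g)
    (hg : g ≠ 0) : q.totalDegree ≤ g.totalDegree := by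
  obtain ⟨r, rfl⟩ := h
  have hq : q ≠ 0 := fun h0 => hg (by rw [h0, zero_mul])
  have hr : r ≠ 0 := fun h0 => hg (by rw [h0, mul_zero])
  exact le_trans (Nat.le_add_right _ _) (le_totalDegree_mul hq hr)

private def qpoly {S : Type*} [CommSemiring S] (D : ℕ) (G₁ G₂ : Polynomial S)
    (c : Fin (2 * D + 1)) : Polynomial S :=
  if (c : ℕ) ≤ D then Polynomial.X ^ (c : ℕ) * G₁ else Polynomial.X ^ ((c : ℕ) - (D + 1)) * G₂

private def sylMat {S : Type*} [CommSemiring S] (D : ℕ) (G₁ G₂ : Polynomial S) :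
    Matrix (Fin (2 * D + 1)) (Fin (2 * D + 1)) S :=
  Matrix.of fun r c => (qpoly D G₁ G₂ c).coeff (r : ℕ)

private lemma syl_coprime {D : ℕ} {G₁ G₂ : Polynomial ℂ} (h₁ : G₁.natDegree ≤ D)
    (h₂ : G₂.natDegree ≤ D) (hdet : (sylMat D G₁ G₂).det ≠ 0) : IsCoprime G₁ G₂ := by
  classical
  set S := sylMat D G₁ G₂ with hS
  have hunit : IsUnit S.det := isUnit_iff_ne_zero.mpr hdet
  set e0 : Fin (2 * D + 1) → ℂ := fun r => if r = 0 then 1 else 0 with he0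
  set x := S⁻¹.mulVec e0 with hx0
  have hx : S.mulVec x = e0 := by
    rw [hx0, Matrix.mulVec_mulVec, Matrix.mul_nonsing_inv _ hunit, Matrix.one_mulVec]
  set P : Polynomial ℂ := ∑ c : Fin (2 * D + 1), Polynomial.C (x c) * qpoly D G₁ G₂ c with hP
  have hdegq : ∀ c : Fin (2 * D + 1), (qpoly D G₁ G₂ c).natDegree ≤ 2 * D := by
    intro c
    rw [qpoly]
    split_ifs with hc
    · refine le_trans Polynomial.natDegree_mul_le ?_
      rw [Polynomial.natDegree_X_pow]
      omega
    · refine le_trans Polynomial.natDegree_mul_le ?_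
      rw [Polynomial.natDegree_X_pow]
      have := c.isLt
      omega
  have hP1 : P = 1 := by
    refine Polynomial.ext fun r => ?_
    rw [hP, Polynomial.finset_sum_coeff]
    by_cases hr : r < 2 * D + 1
    · have hrow := congrFun hx ⟨r, hr⟩
      rw [Matrix.mulVec, dotProduct] at hrow
      calc ∑ c : Fin (2 * D + 1), (Polynomial.C (x c) * qpoly D G₁ G₂ c).coeff r
          = ∑ c : Fin (2 * D + 1), S ⟨r, hr⟩ c * x c := by
            refine Finset.sum_congr rfl fun c _ => ?_
            rw [Polynomial.coeff_C_mul, mul_comm]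
            rfl
        _ = e0 ⟨r, hr⟩ := hrow
        _ = Polynomial.coeff 1 r := by
            rw [he0, Polynomial.coeff_one]
            simp only [Fin.ext_iff]
            rfl
    · have hz : ∀ c : Fin (2 * D + 1), (Polynomial.C (x c) * qpoly D G₁ G₂ c).coeff r = 0 := by
        intro c
        refine Polynomial.coeff_eq_zero_of_natDegree_lt
          (lt_of_le_of_lt (le_trans (Polynomial.natDegree_C_mul_le _ _) (hdegq c)) (by omega))
      rw [Finset.sum_eq_zero fun c _ => hz c, Polynomial.coeff_one, if_neg (by omega)]
  have hmem : P ∈ Ideal.span ({G₁, G₂} : Set (Polynomial ℂ)) := by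
    rw [hP]
    refine Ideal.sum_mem _ fun c _ => ?_
    have hq : qpoly D G₁ G₂ c ∈ Ideal.span ({G₁, G₂} : Set (Polynomial ℂ)) := by
      rw [qpoly]
      split_ifs
      · exact Ideal.mul_mem_left _ _ (Ideal.subset_span (by simp))
      · exact Ideal.mul_mem_left _ _ (Ideal.subset_span (by simp))
    exact Ideal.mul_mem_left _ _ hq
  rw [hP1] at hmem
  obtain ⟨u, v, huv⟩ := Ideal.mem_span_pair.mp hmem
  exact ⟨u, v, huv⟩

private lemma totalDegree_det_le {n ℓ d : ℕ}
    (N : Matrix (Fin ℓ) (Fin ℓ) (MvPolynomial (Fin n) ℂ))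
    (h : ∀ i j, (N i j).totalDegree ≤ d) : N.det.totalDegree ≤ ℓ * d := by
  rw [Matrix.det_apply]
  refine le_trans (MvPolynomial.totalDegree_finset_sum _ _) ?_
  refine Finset.sup_le fun σ _ => ?_
  have h1 : (Equiv.Perm.sign σ • ∏ i, N (σ i) i).totalDegree
      ≤ (∏ i, N (σ i) i).totalDegree := by
    rcases Int.units_eq_one_or (Equiv.Perm.sign σ) with hs | hs <;> rw [hs]
    · rw [one_smul]
    · rw [Units.neg_smul, one_smul, MvPolynomial.totalDegree_neg]
  refine le_trans h1 (le_trans (MvPolynomial.totalDegree_finset_prod _ _) ?_)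
  calc ∑ i, (N (σ i) i).totalDegree ≤ ∑ _i : Fin ℓ, d := Finset.sum_le_sum fun i _ => h _ _
    _ = ℓ * d := by simp [Finset.sum_const, mul_comm]


private instance monFintype (n d : ℕ) : Fintype {m : Fin n →₀ ℕ // m.degree ≤ d} :=
  Fintype.ofInjective
    (fun m (j : Fin n) => (⟨m.1 j, lt_of_le_of_lt (le_trans (Finsupp.le_degree j m.1) m.2)
      (Nat.lt_succ_self d)⟩ : Fin (d + 1)))
    (by
      intro m₁ m₂ h
      refine Subtype.ext (Finsupp.ext fun j => ?_)
      exact congrArg Fin.val (congrFun h j))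

private def Muniv (n k ℓ d : ℕ) :
    Matrix (Fin ℓ) (Fin k) (MvPolynomial (Fin n)
      (MvPolynomial (Fin ℓ × Fin k × {m : Fin n →₀ ℕ // m.degree ≤ d}) ℂ)) :=
  Matrix.of fun i j => ∑ m : {m : Fin n →₀ ℕ // m.degree ≤ d},
    MvPolynomial.monomial m.1 (MvPolynomial.X (i, j, m))

private lemma map_Muniv {n k ℓ d : ℕ} (M : Matrix (Fin ℓ) (Fin k) (MvPolynomial (Fin n) ℂ))
    (hdeg : ∀ i j, (M i j).totalDegree ≤ d) (i : Fin ℓ) (j : Fin k) :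
    MvPolynomial.map (MvPolynomial.eval (matrixCoeffs (d := d) M)) (Muniv n k ℓ d i j)
      = M i j := by
  rw [Muniv, Matrix.of_apply, map_sum]
  have h1 : ∀ m : {m : Fin n →₀ ℕ // m.degree ≤ d},
      MvPolynomial.map (MvPolynomial.eval (matrixCoeffs (d := d) M))
        (monomial m.1 (MvPolynomial.X (i, j, m)))
      = monomial m.1 (MvPolynomial.coeff m.1 (M i j)) := by
    intro m
    rw [MvPolynomial.map_monomial, MvPolynomial.eval_X]
    rfl
  rw [Finset.sum_congr rfl fun m _ => h1 m]
  apply MvPolynomial.ext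
  intro m'
  rw [MvPolynomial.coeff_sum]
  by_cases hm' : m'.degree ≤ d
  · rw [Finset.sum_eq_single (⟨m', hm'⟩ : {m : Fin n →₀ ℕ // m.degree ≤ d})]
    · rw [MvPolynomial.coeff_monomial, if_pos rfl]
    · intro b _ hb
      rw [MvPolynomial.coeff_monomial, if_neg fun hbm => hb (Subtype.ext hbm)]
    · intro hmem
      exact absurd (Finset.mem_univ _) hmem
  · rw [Finset.sum_eq_zero fun b _ => by
      rw [MvPolynomial.coeff_monomial, if_neg ?_]
      intro hbm
      exact hm' (hbm ▸ b.2)]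
    have h2 : d < ∑ i ∈ m'.support, m' i := by
      change d < m'.degree
      omega
    exact (MvPolynomial.coeff_eq_zero_of_totalDegree_lt (lt_of_le_of_lt (hdeg i j) h2)).symm

private lemma phi_map {S S' : Type*} [CommSemiring S] [CommSemiring S'] (f : S →+* S')
    (n ℓ d : ℕ) (p : MvPolynomial (Fin n) S) :
    phi S' n ℓ d (MvPolynomial.map f p) = Polynomial.map f (phi S n ℓ d p) := by
  have h : (phi S' n ℓ d).comp (MvPolynomial.map f)
      = (Polynomial.mapRingHom f).comp (phi S n ℓ d) := by
    apply MvPolynomial.ringHom_ext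
    · intro r
      simp [phi]
    · intro j
      simp [phi, Polynomial.map_pow]
  have h2 := RingHom.congr_fun h p
  simpa using h2


end GenericTF

set_option maxHeartbeats 2000000 in
open GenericTF MvPolynomial in
/-- In the strictly underdetermined case `ℓ < k`, generically the module `A^k/P` is
torsion-free: the set of matrices in `M_{ℓ,k}(d)` whose rows generate a submodule `P ⊆ A^k`
with `A^k/P` torsion-free contains a nonempty Zariski-open subset; i.e. there is a nonzero
polynomial `F` in the `N = ℓ·k·(n+d choose n)` coefficient variables such that for every
`ℓ × k` matrix of degree at most `d` whose coefficient vector does not annihilate `F`, the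
quotient `A^k/P` is torsion-free. -/
theorem generic_torsionFree (n k ℓ d : ℕ) (hn : 0 < n) (hl : 0 < ℓ) (hlk : ℓ < k) :
    ∃ F : MvPolynomial (Fin ℓ × Fin k × {m : Fin n →₀ ℕ // m.degree ≤ d}) ℂ,
      F ≠ 0 ∧
      ∀ M : Matrix (Fin ℓ) (Fin k) (MvPolynomial (Fin n) ℂ),
        (∀ i j, (M i j).totalDegree ≤ d) →
        MvPolynomial.eval (matrixCoeffs (d := d) M) F ≠ 0 →
        ∀ p : MvPolynomial (Fin n) ℂ, p ≠ 0 →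
          ∀ m : (Fin k → MvPolynomial (Fin n) ℂ) ⧸
              Submodule.span (MvPolynomial (Fin n) ℂ) (Set.range fun i j => M i j),
            p • m = 0 → m = 0 := by
  classical
  set D := kD n ℓ d with hD
  set S₁ : Fin ℓ → Fin k := fun j => ⟨(j : ℕ), lt_trans j.isLt hlk⟩ with hS₁
  set S₂ : Fin ℓ → Fin k := fun j => ⟨(j : ℕ) + 1, by have := j.isLt; omega⟩ with hS₂
  set G1R := phi _ n ℓ d (Matrix.det (Matrix.of fun i j : Fin ℓ => Muniv n k ℓ d i (S₁ j)))
    with hG1R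
  set G2R := phi _ n ℓ d (Matrix.det (Matrix.of fun i j : Fin ℓ => Muniv n k ℓ d i (S₂ j)))
    with hG2R
  have evalF : ∀ M : Matrix (Fin ℓ) (Fin k) (MvPolynomial (Fin n) ℂ),
      (∀ i j, (M i j).totalDegree ≤ d) →
      MvPolynomial.eval (matrixCoeffs (d := d) M) ((sylMat D G1R G2R).det)
        = (sylMat D (phi ℂ n ℓ d (Matrix.det (Matrix.of fun i j : Fin ℓ => M i (S₁ j))))
            (phi ℂ n ℓ d (Matrix.det (Matrix.of fun i j : Fin ℓ => M i (S₂ j))))).det := by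
    intro M hdeg
    have hGmap : ∀ St : Fin ℓ → Fin k,
        Polynomial.map (MvPolynomial.eval (matrixCoeffs (d := d) M))
          (phi _ n ℓ d (Matrix.det (Matrix.of fun i j : Fin ℓ => Muniv n k ℓ d i (St j))))
        = phi ℂ n ℓ d (Matrix.det (Matrix.of fun i j : Fin ℓ => M i (St j))) := by
      intro St
      rw [← phi_map]
      congr 1
      rw [RingHom.map_det]
      congr 1
      apply Matrix.ext
      intro i j
      simp only [Matrix.map_apply, Matrix.of_apply]
      exact map_Muniv M hdeg i (St j)
    rw [RingHom.map_det]
    congr 1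
    apply Matrix.ext
    intro r c
    simp only [RingHom.mapMatrix_apply, sylMat, Matrix.map_apply, Matrix.of_apply]
    rw [← Polynomial.coeff_map]
    congr 1
    rw [qpoly, qpoly]
    split_ifs with hc
    · rw [Polynomial.map_mul, Polynomial.map_pow, Polynomial.map_X, hG1R, hGmap S₁]
    · rw [Polynomial.map_mul, Polynomial.map_pow, Polynomial.map_X, hG2R, hGmap S₂]
  set v : Fin n := ⟨n - 1, by omega⟩ with hv
  set M₀ : Matrix (Fin ℓ) (Fin k) (MvPolynomial (Fin n) ℂ) :=
    Matrix.of fun i j =>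
      if (j : ℕ) = (i : ℕ) then (X v : MvPolynomial (Fin n) ℂ) ^ d
      else if (j : ℕ) = (i : ℕ) + 1 then 1 else 0 with hM₀
  have hdeg₀ : ∀ i j, (M₀ i j).totalDegree ≤ d := by
    intro i j
    simp only [hM₀, Matrix.of_apply]
    split_ifs
    · exact le_trans (MvPolynomial.totalDegree_pow _ _)
        (by rw [MvPolynomial.totalDegree_X]; omega)
    · rw [MvPolynomial.totalDegree_one]; omega
    · rw [MvPolynomial.totalDegree_zero]; omega
  have hdet1 : Matrix.det (Matrix.of fun i j : Fin ℓ => M₀ i (S₁ j))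
      = (X v : MvPolynomial (Fin n) ℂ) ^ (d * ℓ) := by
    rw [Matrix.det_of_upperTriangular]
    · calc ∏ i : Fin ℓ, (Matrix.of fun i j : Fin ℓ => M₀ i (S₁ j)) i i
          = ∏ _i : Fin ℓ, (X v : MvPolynomial (Fin n) ℂ) ^ d := by
            refine Finset.prod_congr rfl fun i _ => ?_
            simp only [Matrix.of_apply, hM₀, hS₁]
            simp
        _ = ((X v : MvPolynomial (Fin n) ℂ) ^ d) ^ ℓ := by
            rw [Finset.prod_const, Finset.card_univ, Fintype.card_fin]
        _ = _ := by rw [← pow_mul]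
    · intro i j hij
      have hij' : (j : ℕ) < (i : ℕ) := hij
      simp only [Matrix.of_apply, hM₀, hS₁]
      rw [if_neg (by omega), if_neg (by omega)]
  have hdet2 : Matrix.det (Matrix.of fun i j : Fin ℓ => M₀ i (S₂ j)) = 1 := by
    rw [Matrix.det_of_lowerTriangular]
    · calc ∏ i : Fin ℓ, (Matrix.of fun i j : Fin ℓ => M₀ i (S₂ j)) i i
          = ∏ _i : Fin ℓ, (1 : MvPolynomial (Fin n) ℂ) := by
            refine Finset.prod_congr rfl fun i _ => ?_
            simp only [Matrix.of_apply, hM₀, hS₂]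
            rw [if_neg (by omega)]
            simp
        _ = 1 := Finset.prod_const_one
    · intro i j hij
      have hij' : (i : ℕ) < (j : ℕ) := hij
      simp only [Matrix.of_apply, hM₀, hS₂]
      rw [if_neg (by omega), if_neg (by omega)]
  have hphi1 : phi ℂ n ℓ d ((X v : MvPolynomial (Fin n) ℂ) ^ (d * ℓ))
      = Polynomial.X ^ D := by
    rw [map_pow]
    have hXv : phi ℂ n ℓ d (X v : MvPolynomial (Fin n) ℂ)
        = Polynomial.X ^ kb ℓ d ^ (n - 1) := by
      simp [phi, hv]
    rw [hXv, ← pow_mul]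
    congr 1
    rw [hD, kD]
    ring
  set σp : Equiv.Perm (Fin (2 * D + 1)) :=
    { toFun := fun c => ⟨if (c : ℕ) ≤ D then (c : ℕ) + D else (c : ℕ) - (D + 1),
        by have := c.isLt; split_ifs <;> omega⟩
      invFun := fun r => ⟨if D ≤ (r : ℕ) then (r : ℕ) - D else (r : ℕ) + (D + 1),
        by have := r.isLt; split_ifs <;> omega⟩
      left_inv := by
        intro c
        have hc := c.isLt
        apply Fin.ext
        dsimp only
        split_ifs <;> omega
      right_inv := by
        intro r
        have hr := r.isLt
        apply Fin.ext
        dsimp only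
        split_ifs <;> omega } with hσp
  have hsyl0 : (sylMat D (Polynomial.X ^ D : Polynomial ℂ) 1).det ≠ 0 := by
    have hperm : sylMat D (Polynomial.X ^ D : Polynomial ℂ) 1 = (σp.permMatrix ℂ).transpose := by
      apply Matrix.ext
      intro r c
      rw [Matrix.transpose_apply]
      simp only [Equiv.Perm.permMatrix]
      rw [PEquiv.toMatrix_toPEquiv_apply, Pi.single_apply]
      simp only [sylMat, Matrix.of_apply, qpoly]
      by_cases hc : (c : ℕ) ≤ D
      · rw [if_pos hc, ← pow_add, Polynomial.coeff_X_pow]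
        have hvv : (σp c : ℕ) = (c : ℕ) + D := by
          show (if (c : ℕ) ≤ D then (c : ℕ) + D else (c : ℕ) - (D + 1)) = _
          rw [if_pos hc]
        exact if_congr (by rw [Fin.ext_iff, hvv]) rfl rfl
      · rw [if_neg hc, mul_one, Polynomial.coeff_X_pow]
        have hvv : (σp c : ℕ) = (c : ℕ) - (D + 1) := by
          show (if (c : ℕ) ≤ D then (c : ℕ) + D else (c : ℕ) - (D + 1)) = _
          rw [if_neg hc]
        exact if_congr (by rw [Fin.ext_iff, hvv]) rfl rfl
    rw [hperm, Matrix.det_transpose, Matrix.det_permutation]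
    rcases Int.units_eq_one_or (Equiv.Perm.sign σp) with hs | hs <;> rw [hs] <;> norm_num
  refine ⟨(sylMat D G1R G2R).det, ?_, ?_⟩
  · intro h
    have hF0 : MvPolynomial.eval (matrixCoeffs (d := d) M₀) ((sylMat D G1R G2R).det) ≠ 0 := by
      rw [evalF M₀ hdeg₀, hdet1, hdet2, hphi1, map_one]
      exact hsyl0
    rw [h, map_zero] at hF0
    exact hF0 rfl
  · intro M hdeg hFM p hp m hpm
    obtain ⟨mh, rfl⟩ := Submodule.Quotient.mk_surjective _ m
    rw [← Submodule.Quotient.mk_smul, Submodule.Quotient.mk_eq_zero] at hpm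
    rw [Submodule.Quotient.mk_eq_zero]
    rw [Submodule.mem_span_range_iff_exists_fun] at hpm ⊢
    obtain ⟨a, ha⟩ := hpm
    have harow : ∀ j, ∑ i, a i * M i j = p * mh j := by
      intro j
      have h1 := congrFun ha j
      simpa [Finset.sum_apply, smul_eq_mul] using h1
    have cram : ∀ St : Fin ℓ → Fin k, ∀ i : Fin ℓ,
        (Matrix.of fun i j : Fin ℓ => M i (St j)).det * a i
          = p * Matrix.vecMul (fun j => mh (St j))
              (Matrix.adjugate (Matrix.of fun i j : Fin ℓ => M i (St j))) i := by
      intro St i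
      set C := Matrix.of fun i j : Fin ℓ => M i (St j) with hC
      have h1 : Matrix.vecMul a C = fun j => p * mh (St j) := by
        funext j
        show ∑ t, a t * C t j = _
        exact harow (St j)
      have h2 := congrArg (fun w => Matrix.vecMul w (Matrix.adjugate C)) h1
      rw [Matrix.vecMul_vecMul, Matrix.mul_adjugate] at h2
      have h3 := congrFun h2 i
      have h4 : Matrix.vecMul a (C.det • (1 : Matrix (Fin ℓ) (Fin ℓ) _)) i = C.det * a i := by
        simp [Matrix.vecMul, dotProduct, Matrix.smul_apply, Matrix.one_apply, mul_ite,
          Finset.sum_ite_eq', mul_comm]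
      have h5 : Matrix.vecMul (fun j => p * mh (St j)) (Matrix.adjugate C) i
          = p * Matrix.vecMul (fun j => mh (St j)) (Matrix.adjugate C) i := by
        simp [Matrix.vecMul, dotProduct, Finset.mul_sum, mul_assoc]
      rw [h4, h5] at h3
      exact h3
    have hcop : IsCoprime (phi ℂ n ℓ d (Matrix.of fun i j : Fin ℓ => M i (S₁ j)).det)
        (phi ℂ n ℓ d (Matrix.of fun i j : Fin ℓ => M i (S₂ j)).det) := by
      apply syl_coprime (D := D)
      · exact natDegree_phi_le (totalDegree_det_le _ fun i j => hdeg _ _)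
      · exact natDegree_phi_le (totalDegree_det_le _ fun i j => hdeg _ _)
      · rw [← evalF M hdeg]; exact hFM
    have hdvd : ∀ i, p ∣ a i := by
      intro i
      by_cases hai : a i = 0
      · rw [hai]; exact dvd_zero p
      obtain ⟨a', p', s, hrel, hsa, hsp⟩ :=
        UniqueFactorizationMonoid.exists_reduced_factors (a i) hai p
      have hs0 : s ≠ 0 := fun h => hai (by rw [← hsa, h, zero_mul])
      have key : ∀ St : Fin ℓ → Fin k,
          p' ∣ (Matrix.of fun i j : Fin ℓ => M i (St j)).det := by
        intro St
        have hcr := cram St i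
        rw [← hsa, ← hsp] at hcr
        set w := Matrix.vecMul (fun j => mh (St j))
          (Matrix.adjugate (Matrix.of fun i j : Fin ℓ => M i (St j))) i with hw
        have hcc : (Matrix.of fun i j : Fin ℓ => M i (St j)).det * a' * s = p' * w * s := by
          calc (Matrix.of fun i j : Fin ℓ => M i (St j)).det * a' * s
              = (Matrix.of fun i j : Fin ℓ => M i (St j)).det * (s * a') := by ring
            _ = s * p' * w := hcr
            _ = p' * w * s := by ring
        have hcc2 := mul_right_cancel₀ hs0 hcc
        exact hrel.symm.dvd_of_dvd_mul_right ⟨w, hcc2⟩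
      have hup' : IsUnit p' := by
        have hd1 := map_dvd (phi ℂ n ℓ d) (key S₁)
        have hd2 := map_dvd (phi ℂ n ℓ d) (key S₂)
        have hu : IsUnit (phi ℂ n ℓ d p') := hcop.isUnit_of_dvd' hd1 hd2
        have hg : (Matrix.of fun i j : Fin ℓ => M i (S₁ j)).det ≠ 0 ∨
            (Matrix.of fun i j : Fin ℓ => M i (S₂ j)).det ≠ 0 := by
          by_contra hboth
          push_neg at hboth
          obtain ⟨h1, h2⟩ := hboth
          rw [h1, h2, map_zero] at hcop
          exact not_isUnit_zero (hcop.isUnit_of_dvd' (dvd_refl 0) (dvd_refl 0))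
        have hdegp' : p'.totalDegree ≤ ℓ * d := by
          rcases hg with hg | hg
          · exact le_trans (totalDegree_le_of_dvd (key S₁) hg)
              (totalDegree_det_le _ fun i j => hdeg _ _)
          · exact le_trans (totalDegree_le_of_dvd (key S₂) hg)
              (totalDegree_det_le _ fun i j => hdeg _ _)
        exact isUnit_of_phi hdegp' hu
      rw [← hsa, ← hsp]
      exact mul_dvd_mul_left s hup'.dvd
    choose c hc using hdvd
    refine ⟨c, ?_⟩
    funext j
    apply mul_left_cancel₀ hp
    calc p * (∑ i, c i • fun j' => M i j') j = ∑ i, p * (c i * M i j) := by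
          rw [Finset.sum_apply, Finset.mul_sum]
          exact Finset.sum_congr rfl fun i _ => by simp [smul_eq_mul]
      _ = ∑ i, a i * M i j := by
          refine Finset.sum_congr rfl fun i _ => ?_
          rw [← mul_assoc, ← hc i]
      _ = p * mh j := harow j
end
end

section
/- Suppose ℓ = k, n ≥ 1 and d ≥ 1 (the overdetermined case). The set of matrices P(∂) in M_{k,k}(d) for which the distributed system ℬ(P) is NOT controllable contains a nonempty Zariski-open subset of M_{k,k}(d); that is, there exists a nonzero polynomial F in N = k²·(n+d choose n) variables such that every k×k matrix of degree at most d whose coefficient vector is not a zero of F defines an uncontrollable system (equivalently, the quotient A^k/P has nonzero torsion). -/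
noncomputable section

/-- The space of smooth (infinitely differentiable) functions `ℝⁿ → ℂ`,
as a `ℂ`-submodule of the space of all functions `ℝⁿ → ℂ`. -/
def Cinf (n : ℕ) : Submodule ℂ ((Fin n → ℝ) → ℂ) where
  carrier := {f | ContDiff ℝ (⊤ : ℕ∞) f}
  add_mem' := fun {f g} hf hg => by
    simp only [Set.mem_setOf_eq] at *
    exact hf.add hg
  zero_mem' := by
    simp only [Set.mem_setOf_eq]
    exact contDiff_const
  smul_mem' := fun c f hf => by
    simp only [Set.mem_setOf_eq] at *
    exact hf.const_smul c

/-- The distributed system `ℬ(P)` defined by an `ℓ × k` matrix `M` of elements of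
`A = ℂ[∂₁, …, ∂ₙ]`: the kernel `{f ∈ (C^∞)^k : M f = 0}` of the operator
`(C^∞)^k → (C^∞)^ℓ` given by `M`, where `A` acts on `C^∞` via a given module structure. -/
def system {n ℓ k : ℕ} [Module (MvPolynomial (Fin n) ℂ) (Cinf n)]
    (M : Matrix (Fin ℓ) (Fin k) (MvPolynomial (Fin n) ℂ)) : Set (Fin k → Cinf n) :=
  {f | ∀ i : Fin ℓ, ∑ j, M i j • f j = 0}

/-- A behaviour `B ⊆ (C^∞)^k` is controllable if for any two subsets `U₁, U₂` of `ℝⁿ`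
whose closures do not intersect, and any `f₁, f₂ ∈ B`, there is an `f ∈ B` agreeing with
`f₁` on a neighbourhood of `U₁` and with `f₂` on a neighbourhood of `U₂`. -/
def IsControllable {n k : ℕ} (B : Set (Fin k → Cinf n)) : Prop :=
  ∀ U₁ U₂ : Set (Fin n → ℝ), closure U₁ ∩ closure U₂ = ∅ →
    ∀ f₁ ∈ B, ∀ f₂ ∈ B, ∃ f ∈ B, ∃ V₁ V₂ : Set (Fin n → ℝ),
      IsOpen V₁ ∧ IsOpen V₂ ∧ U₁ ⊆ V₁ ∧ U₂ ⊆ V₂ ∧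
      (∀ x ∈ V₁, ∀ j, (f j : (Fin n → ℝ) → ℂ) x = (f₁ j : (Fin n → ℝ) → ℂ) x) ∧
      (∀ x ∈ V₂, ∀ j, (f j : (Fin n → ℝ) → ℂ) x = (f₂ j : (Fin n → ℝ) → ℂ) x)

namespace GenUncon

open MvPolynomial

variable {n : ℕ}

/-- Restriction of a multivariate polynomial to a (complex) line `t ↦ a + t • b`. -/
def linePoly (a b : Fin n → ℂ) (q : MvPolynomial (Fin n) ℂ) : Polynomial ℂ :=
  eval₂ Polynomial.C (fun i => Polynomial.C (a i) + Polynomial.C (b i) * Polynomial.X) q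

lemma linePoly_eval (a b : Fin n → ℂ) (q : MvPolynomial (Fin n) ℂ) (t : ℂ) :
    (linePoly a b q).eval t = eval (fun i => a i + b i * t) q := by
  have h := MvPolynomial.eval₂_comp_left (Polynomial.evalRingHom t) Polynomial.C
    (fun i => Polynomial.C (a i) + Polynomial.C (b i) * Polynomial.X) q
  have h2 : (Polynomial.evalRingHom t).comp (Polynomial.C) = RingHom.id ℂ := by
    ext x; simp
  rw [linePoly]
  show (Polynomial.evalRingHom t) (eval₂ Polynomial.C _ q) = _
  rw [h, h2]
  have h3 : ((Polynomial.evalRingHom t) ∘ fun i =>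
      Polynomial.C (a i) + Polynomial.C (b i) * Polynomial.X) = fun i => a i + b i * t := by
    funext i; simp
  rw [h3]
  rfl

lemma coeff_linePoly_axis (i₀ : Fin n) (c : ℂ) (q : MvPolynomial (Fin n) ℂ) (K : ℕ) :
    (linePoly 0 (fun i => if i = i₀ then c else 0) q).coeff K
      = c ^ K * MvPolynomial.coeff (Finsupp.single i₀ K) q := by
  classical
  rw [linePoly]
  conv_lhs => rw [MvPolynomial.as_sum q]
  rw [MvPolynomial.eval₂_sum, Polynomial.finset_sum_coeff]
  have key : ∀ m ∈ q.support,
      (MvPolynomial.eval₂ Polynomial.C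
        (fun i => Polynomial.C ((0 : Fin n → ℂ) i)
          + Polynomial.C (if i = i₀ then c else 0) * Polynomial.X)
        (monomial m (MvPolynomial.coeff m q))).coeff K
      = if m = Finsupp.single i₀ K then c ^ K * MvPolynomial.coeff (Finsupp.single i₀ K) q
        else 0 := by
    intro m _
    rw [MvPolynomial.eval₂_monomial]
    by_cases hsupp : m.support ⊆ {i₀}
    · obtain ⟨e, hm⟩ := Finsupp.support_subset_singleton'.mp hsupp
      subst hm
      have hprod : (Finsupp.single i₀ e).prod
          (fun i e => (Polynomial.C ((0 : Fin n → ℂ) i)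
            + Polynomial.C (if i = i₀ then c else 0) * Polynomial.X) ^ e)
          = (Polynomial.C c * Polynomial.X) ^ e := by
        rw [Finsupp.prod_single_index (by simp)]
        simp
      rw [hprod, mul_pow, ← Polynomial.C_pow, ← mul_assoc, ← Polynomial.C_mul,
        Polynomial.coeff_C_mul_X_pow]
      by_cases hKe : e = K
      · subst hKe
        simp
        ring
      · rw [if_neg (fun h => hKe h.symm), if_neg]
        intro hs
        exact hKe ((Finsupp.single_injective i₀) hs)
    · obtain ⟨i, hi, hne⟩ : ∃ i ∈ m.support, i ≠ i₀ := by
        by_contra h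
        push_neg at h
        exact hsupp fun i hi => Finset.mem_singleton.mpr (h i hi)
      have hprod : m.prod (fun i e => (Polynomial.C ((0 : Fin n → ℂ) i)
            + Polynomial.C (if i = i₀ then c else 0) * Polynomial.X) ^ e) = 0 := by
        apply Finset.prod_eq_zero hi
        simp only [Pi.zero_apply, map_zero, zero_add, if_neg hne, map_zero, zero_mul]
        exact zero_pow (Finsupp.mem_support_iff.mp hi)
      rw [hprod, mul_zero, Polynomial.coeff_zero]
      rw [if_neg]
      intro hm
      apply hne
      have := hm ▸ hi
      simpa using Finset.mem_singleton.mp (Finsupp.support_single_subset this)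
  rw [Finset.sum_congr rfl key, Finset.sum_ite_eq' q.support]
  by_cases hmem : Finsupp.single i₀ K ∈ q.support
  · rw [if_pos hmem]
  · rw [if_neg hmem]
    rw [MvPolynomial.notMem_support_iff.mp hmem, mul_zero]

variable {n : ℕ}

lemma finite_real_roots (g : Polynomial ℂ) (hg : g ≠ 0) :
    {t : ℝ | g.eval (t : ℂ) = 0}.Finite := by
  have h := Polynomial.finite_setOf_isRoot hg
  have : {t : ℝ | g.eval (t : ℂ) = 0} = (fun t : ℝ => (t : ℂ)) ⁻¹' {z | g.IsRoot z} := rfl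
  rw [this]
  exact h.preimage Complex.ofReal_injective.injOn

lemma exists_avoid {S : Set ℝ} (hS : S.Finite) {δ : ℝ} (hδ : 0 < δ) :
    ∃ t : ℝ, t ∈ Set.Ioo 0 δ ∧ t ∉ S := by
  obtain ⟨t, ht⟩ := ((Set.Ioo_infinite hδ).diff hS).nonempty
  exact ⟨t, ht.1, ht.2⟩

lemma exists_complex_root {i₀ : Fin n} {K : ℕ} (q : MvPolynomial (Fin n) ℂ)
    (hq : MvPolynomial.coeff (Finsupp.single i₀ K) q ≠ 0) (hK : 0 < K) :
    ∃ ξ : Fin n → ℂ, eval ξ q = 0 := by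
  set g := linePoly 0 (fun i => if i = i₀ then 1 else 0) q with hg
  have hcoeff : g.coeff K = MvPolynomial.coeff (Finsupp.single i₀ K) q := by
    rw [hg, coeff_linePoly_axis]; simp
  have hdeg : 0 < g.degree := by
    rw [← Polynomial.natDegree_pos_iff_degree_pos]
    exact lt_of_lt_of_le hK (Polynomial.le_natDegree_of_ne_zero (hcoeff ▸ hq))
  obtain ⟨t₀, ht₀⟩ := Complex.exists_root hdeg
  refine ⟨fun i => if i = i₀ then t₀ else 0, ?_⟩
  have h := linePoly_eval 0 (fun i => if i = i₀ then 1 else 0) q t₀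
  rw [← hg] at h
  have h2 : (fun i => (0 : Fin n → ℂ) i + (if i = i₀ then (1:ℂ) else 0) * t₀)
      = fun i => if i = i₀ then t₀ else 0 := by
    funext i; by_cases hi : i = i₀ <;> simp [hi]
  rw [h2] at h
  rw [← h]
  exact ht₀

lemma exists_real_nonzero {i₀ : Fin n} {K : ℕ} (c : ℂ) (hc : c ≠ 0)
    (q : MvPolynomial (Fin n) ℂ)
    (hq : MvPolynomial.coeff (Finsupp.single i₀ K) q ≠ 0) :
    ∃ x : Fin n → ℝ, eval (fun i => c * (x i : ℂ)) q ≠ 0 := by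
  set g := linePoly 0 (fun i => if i = i₀ then c else 0) q with hg
  have hcoeff : g.coeff K = c ^ K * MvPolynomial.coeff (Finsupp.single i₀ K) q := by
    rw [hg, coeff_linePoly_axis]
  have hgne : g ≠ 0 := by
    intro h0
    rw [h0] at hcoeff
    simp only [Polynomial.coeff_zero] at hcoeff
    exact hq (by
      have := hcoeff.symm
      rcases mul_eq_zero.mp this with h | h
      · exact absurd h (pow_ne_zero _ hc)
      · exact h)
  obtain ⟨t, _, ht⟩ := exists_avoid (finite_real_roots g hgne) (one_pos)
  refine ⟨fun i => if i = i₀ then t else 0, ?_⟩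
  have h := linePoly_eval 0 (fun i => if i = i₀ then c else 0) q (t : ℂ)
  rw [← hg] at h
  have h2 : (fun i => (0 : Fin n → ℂ) i + (if i = i₀ then c else 0) * (t:ℂ))
      = fun i => c * (((if i = i₀ then t else 0 : ℝ) : ℂ)) := by
    funext i; by_cases hi : i = i₀ <;> simp [hi]
  rw [h2] at h
  rw [← h]
  exact fun h0 => ht (by simpa using h0)

lemma dense_nonzero {i₀ : Fin n} {K : ℕ} (c : ℂ) (hc : c ≠ 0)
    (q : MvPolynomial (Fin n) ℂ)
    (hq : MvPolynomial.coeff (Finsupp.single i₀ K) q ≠ 0) :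
    Dense {x : Fin n → ℝ | eval (fun i => c * (x i : ℂ)) q ≠ 0} := by
  obtain ⟨z, hz⟩ := exists_real_nonzero c hc q hq
  rw [Metric.dense_iff]
  intro y r hr
  set g := linePoly (fun i => c * (y i : ℂ)) (fun i => c * ((z i : ℂ) - (y i : ℂ))) q with hg
  have hgval : ∀ t : ℝ, g.eval (t : ℂ)
      = eval (fun i => c * (((y i + t * (z i - y i) : ℝ)) : ℂ)) q := by
    intro t
    rw [hg, linePoly_eval]
    have harg : (fun i => c * ((y i : ℝ) : ℂ) + c * ((z i : ℂ) - ((y i : ℝ) : ℂ)) * (t : ℂ))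
        = fun i => c * (((y i + t * (z i - y i) : ℝ)) : ℂ) := by
      funext i; push_cast; ring
    rw [harg]
  have hg1 : g.eval ((1 : ℝ) : ℂ) ≠ 0 := by
    rw [hgval 1]
    have harg : (fun i => c * (((y i + 1 * (z i - y i) : ℝ)) : ℂ)) = fun i => c * ((z i : ℝ) : ℂ) := by
      funext i; push_cast; ring
    rw [harg]
    exact hz
  have hgne : g ≠ 0 := fun h0 => hg1 (by simp [h0])
  set δ := min 1 (r / (‖z - y‖ + 1)) with hδdef
  have hδpos : 0 < δ := lt_min one_pos (div_pos hr (by positivity))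
  obtain ⟨t, htI, ht⟩ := exists_avoid (finite_real_roots g hgne) hδpos
  refine ⟨y + t • (z - y), ?_, ?_⟩
  · rw [Metric.mem_ball, dist_eq_norm, add_sub_cancel_left, norm_smul]
    have h1 : ‖t‖ = t := Real.norm_of_nonneg htI.1.le
    rw [h1]
    calc t * ‖z - y‖ ≤ t * (‖z - y‖ + 1) := by nlinarith [htI.1]
    _ < r := by
        have h2 : t < r / (‖z - y‖ + 1) := lt_of_lt_of_le htI.2 (min_le_right _ _)
        rw [lt_div_iff₀ (by positivity)] at h2
        exact h2
  · show eval _ q ≠ 0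
    intro h0
    apply ht
    show g.eval (t:ℂ) = 0
    rw [hgval t]
    have harg : (fun i => c * (((y i + t * (z i - y i) : ℝ)) : ℂ))
        = fun i => c * ((((y + t • (z - y)) i : ℝ)) : ℂ) := by
      funext i
      simp [smul_eq_mul]
    rw [harg]
    exact h0


section Generic

lemma degree_single (i₀ : Fin n) (d : ℕ) : (Finsupp.single i₀ d).degree = d := by
  rcases eq_or_ne d 0 with rfl | hd
  · simp
  · rw [Finsupp.degree_single]

instance fintypeDegLE (n d : ℕ) : Fintype {m : Fin n →₀ ℕ // m.degree ≤ d} :=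
  Fintype.subtype
    ((Finset.Iic (Finsupp.equivFunOnFinite.symm fun _ : Fin n => d)).filter
      (fun m => m.degree ≤ d))
    (by
      intro m
      simp only [Finset.mem_filter, Finset.mem_Iic, and_iff_right_iff_imp]
      intro hm
      rw [Finsupp.le_def]
      intro i
      simp only [Finsupp.coe_equivFunOnFinite_symm]
      exact le_trans (Finsupp.le_degree i m) hm)

variable (n k d : ℕ)

/-- The generic `k × k` matrix of differential operators of degree at most `d`. -/
def Mgen : Matrix (Fin k) (Fin k)
    (MvPolynomial (Fin n) (MvPolynomial (Fin k × Fin k × {m : Fin n →₀ ℕ // m.degree ≤ d}) ℂ)) :=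
  fun i j => ∑ t : {m : Fin n →₀ ℕ // m.degree ≤ d}, monomial t.1 (X (i, j, t))

/-- The generic polynomial: coefficient of the pure power monomial `∂₀ ^ (k*d)` in the
determinant of the generic matrix. -/
def Fgen (i₀ : Fin n) : MvPolynomial (Fin k × Fin k × {m : Fin n →₀ ℕ // m.degree ≤ d}) ℂ :=
  MvPolynomial.coeff (Finsupp.single i₀ (k * d)) (Matrix.det (Mgen n k d))

variable {n k d}

lemma map_Mgen (τ : Fin k × Fin k × {m : Fin n →₀ ℕ // m.degree ≤ d} → ℂ) (i j : Fin k) :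
    MvPolynomial.map (eval τ) (Mgen n k d i j)
      = ∑ t : {m : Fin n →₀ ℕ // m.degree ≤ d}, monomial t.1 (τ (i, j, t)) := by
  rw [Mgen, map_sum]
  refine Finset.sum_congr rfl fun t _ => ?_
  rw [MvPolynomial.map_monomial, eval_X]

lemma eval_Fgen (i₀ : Fin n) (τ : Fin k × Fin k × {m : Fin n →₀ ℕ // m.degree ≤ d} → ℂ) :
    eval τ (Fgen n k d i₀)
      = MvPolynomial.coeff (Finsupp.single i₀ (k * d))
          (Matrix.det ((Mgen n k d).map (MvPolynomial.map (eval τ)))) := by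
  rw [Fgen, ← MvPolynomial.coeff_map, RingHom.map_det]
  rfl

lemma sum_monomial_coeff_of_totalDegree_le {M : MvPolynomial (Fin n) ℂ}
    (hM : M.totalDegree ≤ d) :
    (∑ t : {m : Fin n →₀ ℕ // m.degree ≤ d}, monomial t.1 (MvPolynomial.coeff t.1 M)) = M := by
  classical
  apply MvPolynomial.ext
  intro m
  rw [MvPolynomial.coeff_sum]
  simp only [MvPolynomial.coeff_monomial]
  by_cases hm : m.degree ≤ d
  · rw [Finset.sum_eq_single (⟨m, hm⟩ : {m : Fin n →₀ ℕ // m.degree ≤ d})]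
    · simp
    · intro t _ ht
      rw [if_neg]
      exact fun h => ht (Subtype.ext h)
    · intro h
      exact absurd (Finset.mem_univ _) h
  · rw [Finset.sum_eq_zero, eq_comm]
    · apply MvPolynomial.coeff_eq_zero_of_totalDegree_lt
      calc M.totalDegree ≤ d := hM
      _ < m.degree := not_le.mp hm
    · intro t _
      rw [if_neg]
      rintro rfl
      exact hm t.2

lemma eval_Fgen_eq_coeff_det (i₀ : Fin n)
    (M : Matrix (Fin k) (Fin k) (MvPolynomial (Fin n) ℂ))
    (hM : ∀ i j, (M i j).totalDegree ≤ d) :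
    eval (matrixCoeffs (d := d) M) (Fgen n k d i₀)
      = MvPolynomial.coeff (Finsupp.single i₀ (k * d)) (Matrix.det M) := by
  rw [eval_Fgen]
  congr 1
  apply congrArg
  funext i j
  show MvPolynomial.map (eval (matrixCoeffs (d := d) M)) (Mgen n k d i j) = M i j
  rw [map_Mgen]
  have : ∀ t : {m : Fin n →₀ ℕ // m.degree ≤ d},
      matrixCoeffs (d := d) M (i, j, t) = MvPolynomial.coeff t.1 (M i j) := fun t => rfl
  simp_rw [this]
  exact sum_monomial_coeff_of_totalDegree_le (hM i j)

lemma Fgen_ne_zero (hk : 0 < k) (hd : 0 < d) (i₀ : Fin n) : Fgen n k d i₀ ≠ 0 := by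
  classical
  set t₀ : {m : Fin n →₀ ℕ // m.degree ≤ d} :=
    ⟨Finsupp.single i₀ d, le_of_eq (degree_single i₀ d)⟩ with ht₀
  set τ₀ : Fin k × Fin k × {m : Fin n →₀ ℕ // m.degree ≤ d} → ℂ :=
    fun v => if v.1 = v.2.1 ∧ v.2.2 = t₀ then 1 else 0 with hτ₀
  intro h0
  have h1 : eval τ₀ (Fgen n k d i₀) = 0 := by rw [h0]; simp
  rw [eval_Fgen] at h1
  have hentry : ((Mgen n k d).map (MvPolynomial.map (eval τ₀)))
      = Matrix.diagonal (fun _ : Fin k => monomial (Finsupp.single i₀ d) (1 : ℂ)) := by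
    funext i j
    show MvPolynomial.map (eval τ₀) (Mgen n k d i j) = _
    rw [map_Mgen]
    rcases eq_or_ne i j with rfl | hij
    · rw [Finset.sum_eq_single t₀]
      · simp [Matrix.diagonal_apply_eq, hτ₀, ht₀]
      · intro t _ ht
        simp [hτ₀, ht]
      · intro h; exact absurd (Finset.mem_univ _) h
    · rw [Finset.sum_eq_zero, Matrix.diagonal_apply_ne _ hij]
      intro t _
      simp [hτ₀, hij]
  rw [hentry, Matrix.det_diagonal, Finset.prod_const, Finset.card_univ, Fintype.card_fin,
    MvPolynomial.monomial_pow, one_pow, Finsupp.smul_single, smul_eq_mul,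
    MvPolynomial.coeff_monomial, if_pos rfl] at h1
  exact one_ne_zero h1
end Generic


section Action

variable {n : ℕ}

/-- The linear functional `x ↦ ∑ ξ l * x l`. -/
def expCLM (ξ : Fin n → ℂ) : (Fin n → ℝ) →L[ℝ] ℂ :=
  ∑ l, ξ l • (Complex.ofRealCLM.comp (ContinuousLinearMap.proj l))

lemma expCLM_apply (ξ : Fin n → ℂ) (x : Fin n → ℝ) :
    expCLM ξ x = ∑ l, ξ l * (x l : ℂ) := by
  simp [expCLM]

lemma expCLM_single (ξ : Fin n → ℂ) (i : Fin n) :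
    expCLM ξ (Pi.single i 1) = ξ i := by
  rw [expCLM_apply, Finset.sum_eq_single i]
  · simp
  · intro l _ hl
    simp [Pi.single_apply, hl]
  · intro h; exact absurd (Finset.mem_univ _) h

/-- The exponential function `x ↦ exp (∑ ξ l * x l)`. -/
def expFun (ξ : Fin n → ℂ) : (Fin n → ℝ) → ℂ := fun x => Complex.exp (expCLM ξ x)

lemma contDiff_expFun (ξ : Fin n → ℂ) : ContDiff ℝ (⊤ : ℕ∞) (expFun ξ) :=
  (Complex.contDiff_exp (𝕜 := ℝ)).comp (expCLM ξ).contDiff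

/-- The exponential as an element of `Cinf n`. -/
def expC (ξ : Fin n → ℂ) : Cinf n := ⟨expFun ξ, contDiff_expFun ξ⟩

lemma fderiv_expFun (ξ : Fin n → ℂ) (x : Fin n → ℝ) :
    fderiv ℝ (expFun ξ) x = Complex.exp (expCLM ξ x) • expCLM ξ := by
  have h : HasFDerivAt (expFun ξ) (Complex.exp (expCLM ξ x) • expCLM ξ) x :=
    HasFDerivAt.cexp ((expCLM ξ).hasFDerivAt (x := x))
  exact h.fderiv

lemma expFun_ne_zero (ξ : Fin n → ℂ) (x : Fin n → ℝ) : expFun ξ x ≠ 0 :=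
  Complex.exp_ne_zero _

variable [Module (MvPolynomial (Fin n) ℂ) (Cinf n)]
variable (hX : ∀ (i : Fin n) (f : Cinf n),
      (((MvPolynomial.X i : MvPolynomial (Fin n) ℂ) • f : Cinf n) : (Fin n → ℝ) → ℂ) =
        fun x => fderiv ℝ (f : (Fin n → ℝ) → ℂ) x (Pi.single i 1))
variable (hC : ∀ (c : ℂ) (f : Cinf n),
      ((MvPolynomial.C c : MvPolynomial (Fin n) ℂ) • f : Cinf n) = c • f)

include hX in
lemma X_smul_expC (ξ : Fin n → ℂ) (i : Fin n) :
    (X i : MvPolynomial (Fin n) ℂ) • expC ξ = ξ i • expC ξ := by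
  apply Subtype.ext
  rw [hX i (expC ξ)]
  funext x
  show fderiv ℝ (expFun ξ) x (Pi.single i 1) = (ξ i • expC ξ : Cinf n).1 x
  rw [fderiv_expFun]
  show Complex.exp (expCLM ξ x) • (expCLM ξ) (Pi.single i 1) = _
  rw [expCLM_single]
  show Complex.exp (expCLM ξ x) * ξ i = ξ i * expFun ξ x
  rw [expFun, mul_comm]

include hX hC in
lemma smul_expC (ξ : Fin n → ℂ) (p : MvPolynomial (Fin n) ℂ) (c : ℂ) :
    p • (c • expC ξ) = ((eval ξ p) * c) • expC ξ := by
  induction p using MvPolynomial.induction_on generalizing c with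
  | C a =>
    rw [hC a (c • expC ξ), eval_C, smul_smul]
  | add p q hp hq =>
    rw [add_smul, hp c, hq c, map_add, add_mul, add_smul]
  | mul_X p i hp =>
    have h1 : (p * X i : MvPolynomial (Fin n) ℂ) • (c • expC ξ)
        = p • ((X i : MvPolynomial (Fin n) ℂ) • (c • expC ξ)) := by
      rw [mul_smul]
    have h2 : (X i : MvPolynomial (Fin n) ℂ) • (c • expC ξ) = (ξ i * c) • expC ξ := by
      rw [← hC c (expC ξ), ← mul_smul, mul_comm, mul_smul, hC c, X_smul_expC hX ξ i,
        smul_smul, mul_comm c (ξ i)]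
    rw [h1, h2, hp (ξ i * c), map_mul, eval_X]
    congr 1
    ring

end Action


section Fourier

open MeasureTheory FourierTransform

variable {n : ℕ}

/-- Identification of `EuclideanSpace ℝ (Fin n)` with the pi type. -/
def eqv (n : ℕ) : EuclideanSpace ℝ (Fin n) ≃L[ℝ] (Fin n → ℝ) :=
  EuclideanSpace.equiv (Fin n) ℝ

lemma eqv_single (i : Fin n) : eqv n (EuclideanSpace.single i (1 : ℝ)) = Pi.single i 1 := by
  funext j
  rfl

lemma contDiff_comp_eqv {F : (Fin n → ℝ) → ℂ} (hF : ContDiff ℝ (⊤ : ℕ∞) F) :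
    ContDiff ℝ (⊤ : ℕ∞) (F ∘ eqv n) :=
  hF.comp (eqv n).contDiff

lemma fderiv_comp_eqv (F : (Fin n → ℝ) → ℂ) (hF : Differentiable ℝ F)
    (v : EuclideanSpace ℝ (Fin n)) :
    fderiv ℝ (F ∘ eqv n) v
      = (fderiv ℝ F (eqv n v)).comp ((eqv n : EuclideanSpace ℝ (Fin n) →L[ℝ] (Fin n → ℝ))) := by
  exact ((hF (eqv n v)).hasFDerivAt.comp v ((eqv n).hasFDerivAt)).fderiv

variable [Module (MvPolynomial (Fin n) ℂ) (Cinf n)]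
variable (hX : ∀ (i : Fin n) (f : Cinf n),
      (((MvPolynomial.X i : MvPolynomial (Fin n) ℂ) • f : Cinf n) : (Fin n → ℝ) → ℂ) =
        fun x => fderiv ℝ (f : (Fin n → ℝ) → ℂ) x (Pi.single i 1))
variable (hC : ∀ (c : ℂ) (f : Cinf n),
      ((MvPolynomial.C c : MvPolynomial (Fin n) ℂ) • f : Cinf n) = c • f)

include hX in
lemma Xstep (i : Fin n) (f : Cinf n)
    (hsupp : HasCompactSupport ((f : (Fin n → ℝ) → ℂ) ∘ (eqv n))) :
    ((((X i : MvPolynomial (Fin n) ℂ) • f : Cinf n) : (Fin n → ℝ) → ℂ) ∘ (eqv n)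
        = fun v => fderiv ℝ ((f : (Fin n → ℝ) → ℂ) ∘ (eqv n)) v (EuclideanSpace.single i 1))
    ∧ HasCompactSupport ((((X i : MvPolynomial (Fin n) ℂ) • f : Cinf n) : (Fin n → ℝ) → ℂ)
        ∘ (eqv n))
    ∧ ∀ ξ : EuclideanSpace ℝ (Fin n),
        𝓕 ((((X i : MvPolynomial (Fin n) ℂ) • f : Cinf n) : (Fin n → ℝ) → ℂ) ∘ (eqv n)) ξ
          = ((2 * Real.pi * Complex.I) * ((ξ i : ℝ) : ℂ))
              • 𝓕 ((f : (Fin n → ℝ) → ℂ) ∘ (eqv n)) ξ := by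
  have hF : ContDiff ℝ (⊤ : ℕ∞) (f : (Fin n → ℝ) → ℂ) := f.2
  have hG : ContDiff ℝ (⊤ : ℕ∞) ((f : (Fin n → ℝ) → ℂ) ∘ (eqv n)) := contDiff_comp_eqv hF
  have ha : (((X i : MvPolynomial (Fin n) ℂ) • f : Cinf n) : (Fin n → ℝ) → ℂ) ∘ (eqv n)
      = fun v => fderiv ℝ ((f : (Fin n → ℝ) → ℂ) ∘ (eqv n)) v (EuclideanSpace.single i 1) := by
    funext v
    show (((X i : MvPolynomial (Fin n) ℂ) • f : Cinf n) : (Fin n → ℝ) → ℂ) (eqv n v) = _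
    rw [hX i f, fderiv_comp_eqv _ (hF.differentiable (by simp)) v]
    show fderiv ℝ (f : (Fin n → ℝ) → ℂ) (eqv n v) (Pi.single i 1)
      = fderiv ℝ (f : (Fin n → ℝ) → ℂ) (eqv n v) (eqv n (EuclideanSpace.single i (1:ℝ)))
    rw [eqv_single]
  have hb : HasCompactSupport ((((X i : MvPolynomial (Fin n) ℂ) • f : Cinf n) :
      (Fin n → ℝ) → ℂ) ∘ (eqv n)) := by
    rw [ha]
    exact hsupp.fderiv_apply ℝ _
  refine ⟨ha, hb, fun ξ => ?_⟩
  have hGint : Integrable ((f : (Fin n → ℝ) → ℂ) ∘ (eqv n)) :=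
    hG.continuous.integrable_of_hasCompactSupport hsupp
  have hG'int : Integrable (fderiv ℝ ((f : (Fin n → ℝ) → ℂ) ∘ (eqv n))) :=
    (hG.continuous_fderiv (by simp)).integrable_of_hasCompactSupport (hsupp.fderiv (𝕜 := ℝ))
  have key := Real.fourier_fderiv hGint (hG.differentiable (by simp)) hG'int
  rw [ha]
  rw [← Real.fourier_continuousLinearMap_apply hG'int, key]
  rw [VectorFourier.fourierSMulRight_apply]
  simp only [ContinuousLinearMap.neg_apply]
  have hinner : (innerSL ℝ) ξ (EuclideanSpace.single i (1:ℝ)) = ξ i := by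
    simp [EuclideanSpace.inner_single_right]
  rw [hinner]
  rw [Complex.real_smul]
  rw [smul_eq_mul, smul_eq_mul]
  push_cast
  ring


lemma fourierIntegral_zero_fun :
    𝓕 (0 : EuclideanSpace ℝ (Fin n) → ℂ) = 0 := by
  funext w
  simp [Real.fourier_eq]

lemma fourierIntegralInv_zero_fun :
    𝓕⁻ (0 : EuclideanSpace ℝ (Fin n) → ℂ) = 0 := by
  funext w
  simp [Real.fourierInv_eq]

lemma fourierIntegral_smul (c : ℂ) (G : EuclideanSpace ℝ (Fin n) → ℂ) :
    𝓕 (c • G) = c • 𝓕 G :=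
  VectorFourier.fourierIntegral_const_smul _ _ _ _ _

lemma fourierIntegral_add' {G H : EuclideanSpace ℝ (Fin n) → ℂ}
    (hG : MeasureTheory.Integrable G) (hH : MeasureTheory.Integrable H) :
    𝓕 (G + H) = 𝓕 G + 𝓕 H :=
  VectorFourier.fourierIntegral_add Real.continuous_fourierChar continuous_inner hG hH

include hX hC in
lemma fourier_smul (p : MvPolynomial (Fin n) ℂ) :
    ∀ f : Cinf n, HasCompactSupport ((f : (Fin n → ℝ) → ℂ) ∘ (eqv n)) →
      HasCompactSupport (((p • f : Cinf n) : (Fin n → ℝ) → ℂ) ∘ (eqv n)) ∧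
      ∀ ξ : EuclideanSpace ℝ (Fin n),
        𝓕 (((p • f : Cinf n) : (Fin n → ℝ) → ℂ) ∘ (eqv n)) ξ
          = (eval (fun i => (2 * Real.pi * Complex.I) * ((ξ i : ℝ) : ℂ)) p)
              • 𝓕 ((f : (Fin n → ℝ) → ℂ) ∘ (eqv n)) ξ := by
  induction p using MvPolynomial.induction_on with
  | C a =>
    intro f hsupp
    have hcoe : (((MvPolynomial.C a : MvPolynomial (Fin n) ℂ) • f : Cinf n) : (Fin n → ℝ) → ℂ) ∘ (eqv n)
        = a • ((f : (Fin n → ℝ) → ℂ) ∘ (eqv n)) := by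
      funext v
      rw [hC a f]
      rfl
    rw [hcoe]
    constructor
    · exact hsupp.mono (Function.support_smul_subset_right _ _)
    · intro ξ
      rw [fourierIntegral_smul, eval_C]
      rfl
  | add p q hp hq =>
    intro f hsupp
    obtain ⟨hp1, hp2⟩ := hp f hsupp
    obtain ⟨hq1, hq2⟩ := hq f hsupp
    have hcoe : (((p + q) • f : Cinf n) : (Fin n → ℝ) → ℂ) ∘ (eqv n)
        = (((p • f : Cinf n) : (Fin n → ℝ) → ℂ) ∘ (eqv n))
          + (((q • f : Cinf n) : (Fin n → ℝ) → ℂ) ∘ (eqv n)) := by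
      funext v
      rw [add_smul]
      rfl
    rw [hcoe]
    have hip : MeasureTheory.Integrable (((p • f : Cinf n) : (Fin n → ℝ) → ℂ) ∘ (eqv n)) :=
      (contDiff_comp_eqv (p • f).2).continuous.integrable_of_hasCompactSupport hp1
    have hiq : MeasureTheory.Integrable (((q • f : Cinf n) : (Fin n → ℝ) → ℂ) ∘ (eqv n)) :=
      (contDiff_comp_eqv (q • f).2).continuous.integrable_of_hasCompactSupport hq1
    constructor
    · exact hp1.add hq1
    · intro ξ
      rw [fourierIntegral_add' hip hiq]
      simp only [Pi.add_apply]
      rw [hp2 ξ, hq2 ξ, map_add, add_smul]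
  | mul_X p i hp =>
    intro f hsupp
    obtain ⟨_, hb, hc⟩ := Xstep hX i f hsupp
    obtain ⟨H1, H2⟩ := hp ((X i : MvPolynomial (Fin n) ℂ) • f) hb
    have hmul : ((p * X i : MvPolynomial (Fin n) ℂ) • f : Cinf n)
        = p • ((X i : MvPolynomial (Fin n) ℂ) • f) := mul_smul p (X i) f
    rw [hmul]
    refine ⟨H1, fun ξ => ?_⟩
    rw [H2 ξ, hc ξ, map_mul, eval_X, smul_smul]

include hX hC in
lemma support_kill (f : Cinf n)
    (hsupp : HasCompactSupport ((f : (Fin n → ℝ) → ℂ) ∘ (eqv n)))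
    (q : MvPolynomial (Fin n) ℂ) (hq : q • f = 0)
    (hdense : Dense {x : Fin n → ℝ |
      eval (fun i => (2 * Real.pi * Complex.I) * ((x i : ℝ) : ℂ)) q ≠ 0}) :
    ∀ x, (f : (Fin n → ℝ) → ℂ) x = 0 := by
  set G := ((f : (Fin n → ℝ) → ℂ)) ∘ (eqv n) with hGdef
  have hGsm : ContDiff ℝ (⊤ : ℕ∞) G := contDiff_comp_eqv f.2
  have hGint : MeasureTheory.Integrable G :=
    hGsm.continuous.integrable_of_hasCompactSupport hsupp
  have h𝓕 := (fourier_smul hX hC q f hsupp).2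
  have hzero : ((q • f : Cinf n) : (Fin n → ℝ) → ℂ) ∘ (eqv n)
      = (0 : EuclideanSpace ℝ (Fin n) → ℂ) := by
    rw [hq]
    rfl
  have hG0 : ∀ ξ : EuclideanSpace ℝ (Fin n),
      (eval (fun i => (2 * Real.pi * Complex.I) * ((ξ i : ℝ) : ℂ)) q) • 𝓕 G ξ = 0 := by
    intro ξ
    rw [← h𝓕 ξ, hzero, fourierIntegral_zero_fun]
    rfl
  have hdenseE : Dense {ξ : EuclideanSpace ℝ (Fin n) |
      eval (fun i => (2 * Real.pi * Complex.I) * ((ξ i : ℝ) : ℂ)) q ≠ 0} := by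
    have hsurj : DenseRange ((eqv n).symm : (Fin n → ℝ) → EuclideanSpace ℝ (Fin n)) :=
      (eqv n).symm.surjective.denseRange
    have himg := hsurj.dense_image (eqv n).symm.continuous hdense
    apply himg.mono
    rintro ξ ⟨x, hx, rfl⟩
    exact hx
  have hcontF : Continuous (𝓕 G) :=
    VectorFourier.fourierIntegral_continuous Real.continuous_fourierChar continuous_inner hGint
  have hFzero : 𝓕 G = 0 := by
    apply Continuous.ext_on hdenseE hcontF continuous_const
    intro ξ hξ
    rcases smul_eq_zero.mp (hG0 ξ) with h | h
    · exact absurd h hξ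
    · exact h
  have hGzero : ∀ v, G v = 0 := by
    intro v
    have hinv := hGint.fourierInv_fourier_eq (v := v)
      (by rw [hFzero]; exact MeasureTheory.integrable_zero _ _ _)
      (hGsm.continuous.continuousAt)
    rw [hFzero, fourierIntegralInv_zero_fun] at hinv
    exact hinv.symm
  intro x
  have := hGzero ((eqv n).symm x)
  rw [hGdef] at this
  simpa using this

end Fourier

end GenUncon

/-- **Theorem 1.2**, second half (Shankar). In the overdetermined case `ℓ = k` (with `n ≥ 1`,
`d ≥ 1`), a generic system is uncontrollable: the set of matrices in `M_{k,k}(d)` defining an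
uncontrollable distributed system contains a nonempty Zariski-open subset; i.e. there is a
nonzero polynomial `F` in the `N = k²·(n+d choose n)` coefficient variables such that every
`k × k` matrix of degree at most `d` whose coefficient vector does not annihilate `F` defines
an uncontrollable system. -/
theorem generic_uncontrollable (n k d : ℕ) (hn : 0 < n) (hk : 0 < k) (hd : 0 < d)
    [Module (MvPolynomial (Fin n) ℂ) (Cinf n)]
    (hX : ∀ (i : Fin n) (f : Cinf n),
      (((MvPolynomial.X i : MvPolynomial (Fin n) ℂ) • f : Cinf n) : (Fin n → ℝ) → ℂ) =
        fun x => fderiv ℝ (f : (Fin n → ℝ) → ℂ) x (Pi.single i 1))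
    (hC : ∀ (c : ℂ) (f : Cinf n),
      ((MvPolynomial.C c : MvPolynomial (Fin n) ℂ) • f : Cinf n) = c • f) :
    ∃ F : MvPolynomial (Fin k × Fin k × {m : Fin n →₀ ℕ // m.degree ≤ d}) ℂ,
      F ≠ 0 ∧
      ∀ M : Matrix (Fin k) (Fin k) (MvPolynomial (Fin n) ℂ),
        (∀ i j, (M i j).totalDegree ≤ d) →
        MvPolynomial.eval (matrixCoeffs (d := d) M) F ≠ 0 →
        ¬ IsControllable (system M) := by
  classical
  set i₀ : Fin n := ⟨0, hn⟩
  refine ⟨GenUncon.Fgen n k d i₀, GenUncon.Fgen_ne_zero hk hd i₀, ?_⟩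
  intro M hM hF hcontr
  set q := Matrix.det M with hqdef
  have hq : MvPolynomial.coeff (Finsupp.single i₀ (k * d)) q ≠ 0 := by
    rw [← GenUncon.eval_Fgen_eq_coeff_det i₀ M hM]
    exact hF
  have hK : 0 < k * d := Nat.mul_pos hk hd
  obtain ⟨ξ, hξ⟩ := GenUncon.exists_complex_root q hq hK
  have hdet0 : (M.map (MvPolynomial.eval ξ)).det = 0 := by
    rw [← RingHom.mapMatrix_apply, ← RingHom.map_det]
    exact hξ
  obtain ⟨v, hv0, hvker⟩ := Matrix.exists_mulVec_eq_zero_iff.mpr hdet0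
  set g := GenUncon.expC ξ with hgdef
  set f2 : Fin k → Cinf n := fun j => v j • g with hf2def
  have hf2 : f2 ∈ system M := by
    intro i
    have hterm : ∀ j ∈ Finset.univ, M i j • f2 j
        = ((MvPolynomial.eval ξ (M i j)) * v j) • g :=
      fun j _ => GenUncon.smul_expC hX hC ξ (M i j) (v j)
    rw [Finset.sum_congr rfl hterm, ← Finset.sum_smul]
    have hsum : (∑ j, MvPolynomial.eval ξ (M i j) * v j)
        = ((M.map (MvPolynomial.eval ξ)).mulVec v) i := by
      simp [Matrix.mulVec, dotProduct, Matrix.map_apply]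
    rw [hsum, hvker]
    simp
  have hf1 : (fun _ : Fin k => (0 : Cinf n)) ∈ system M := by
    intro i
    simp
  set U₁ : Set (Fin n → ℝ) := {x | 2 ≤ ‖x‖} with hU₁def
  set U₂ : Set (Fin n → ℝ) := Metric.closedBall 0 1 with hU₂def
  have hU₁closed : IsClosed U₁ := isClosed_le continuous_const continuous_norm
  have hU₂closed : IsClosed U₂ := Metric.isClosed_closedBall
  have hsep : closure U₁ ∩ closure U₂ = ∅ := by
    rw [hU₁closed.closure_eq, hU₂closed.closure_eq]
    ext x
    simp only [Set.mem_inter_iff, Set.mem_setOf_eq, Metric.mem_closedBall, dist_zero_right,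
      Set.mem_empty_iff_false, iff_false, not_and, hU₁def, hU₂def]
    intro h1 h2
    linarith
  obtain ⟨f, hfB, V₁, V₂, hV₁open, hV₂open, hU₁V₁, hU₂V₂, hfV₁, hfV₂⟩ :=
    hcontr U₁ U₂ hsep _ hf1 f2 hf2
  have hcs : ∀ j, HasCompactSupport ((f j : (Fin n → ℝ) → ℂ) ∘ (GenUncon.eqv n)) := by
    intro j
    have hbase : HasCompactSupport ((f j : (Fin n → ℝ) → ℂ)) := by
      apply HasCompactSupport.intro (isCompact_closedBall (0 : Fin n → ℝ) 2)
      intro x hx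
      have h2 : 2 ≤ ‖x‖ := by
        by_contra hlt
        exact hx (by
          rw [Metric.mem_closedBall, dist_zero_right]
          linarith)
      rw [hfV₁ x (hU₁V₁ h2) j]
      rfl
    exact hbase.comp_homeomorph (GenUncon.eqv n).toHomeomorph
  have hkill : ∀ jj, q • f jj = 0 := by
    intro jj
    have h2 : ∑ i, Matrix.adjugate M jj i • (∑ l, M i l • f l) = q • f jj := by
      have e1 : ∀ i ∈ Finset.univ, Matrix.adjugate M jj i • (∑ l, M i l • f l)
          = ∑ l, (Matrix.adjugate M jj i * M i l) • f l := by
        intro i _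
        rw [Finset.smul_sum]
        exact Finset.sum_congr rfl fun l _ => (mul_smul _ _ _).symm
      rw [Finset.sum_congr rfl e1, Finset.sum_comm]
      have e2 : ∀ l ∈ Finset.univ, (∑ i, (Matrix.adjugate M jj i * M i l) • f l)
          = ((Matrix.adjugate M * M) jj l) • f l := by
        intro l _
        rw [← Finset.sum_smul, Matrix.mul_apply]
      rw [Finset.sum_congr rfl e2, Matrix.adjugate_mul]
      rw [Finset.sum_eq_single jj]
      · simp [Matrix.smul_apply, Matrix.one_apply, hqdef]
      · intro l _ hl
        rw [Matrix.smul_apply, Matrix.one_apply, if_neg (Ne.symm hl)]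
        simp
      · intro h
        exact absurd (Finset.mem_univ _) h
    rw [← h2, Finset.sum_eq_zero]
    intro i _
    rw [hfB i, smul_zero]
  have hcne : (2 * (Real.pi : ℂ) * Complex.I) ≠ 0 :=
    mul_ne_zero (mul_ne_zero two_ne_zero (by exact_mod_cast Real.pi_ne_zero)) Complex.I_ne_zero
  have hdense := GenUncon.dense_nonzero (i₀ := i₀) (K := k * d)
    (2 * (Real.pi : ℂ) * Complex.I) hcne q hq
  have hzero : ∀ j x, (f j : (Fin n → ℝ) → ℂ) x = 0 := fun j =>
    GenUncon.support_kill hX hC (f j) (hcs j) q (hkill j) hdense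
  obtain ⟨j, hj⟩ := Function.ne_iff.mp hv0
  have h0mem : (0 : Fin n → ℝ) ∈ U₂ := by
    rw [hU₂def, Metric.mem_closedBall]
    simp
  have heq := hfV₂ 0 (hU₂V₂ h0mem) j
  rw [hzero j 0] at heq
  apply hj
  have : (f2 j : (Fin n → ℝ) → ℂ) 0 = v j * GenUncon.expFun ξ 0 := rfl
  rw [this] at heq
  have hexp : GenUncon.expFun ξ 0 = 1 := by
    rw [GenUncon.expFun]
    rw [map_zero, Complex.exp_zero]
  rw [hexp, mul_one] at heq
  exact heq.symm
end
end

section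
/- The B-module ℂ^{ℤⁿ} of all functions w : ℤⁿ → ℂ, with B = ℂ[σ₁,σ₁⁻¹,…,σₙ,σₙ⁻¹] acting by shifts, is an injective B-module: for every injective B-module homomorphism ι : M → M' and every B-module homomorphism φ : M → ℂ^{ℤⁿ}, there exists a B-module homomorphism ψ : M' → ℂ^{ℤⁿ} with ψ ∘ ι = φ. -/
noncomputable section

/-- The Laurent polynomial ring `B = ℂ[σ₁, σ₁⁻¹, …, σₙ, σₙ⁻¹]`,
realized as the group algebra of `ℤⁿ` over `ℂ`. -/
abbrev LaurentB (n : ℕ) := AddMonoidAlgebra ℂ (Fin n → ℤ)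

/-- The shift action of `ℤⁿ` on the space `ℂ^{ℤⁿ}` of functions `ℤⁿ → ℂ`,
as a monoid homomorphism into the `ℂ`-linear endomorphisms:
`(σ_μ w)(m) = w(m + μ)`. -/
def shiftEnd (n : ℕ) : Multiplicative (Fin n → ℤ) →* Module.End ℂ ((Fin n → ℤ) → ℂ) where
  toFun μ :=
    { toFun := fun w m => w (m + Multiplicative.toAdd μ)
      map_add' := fun w v => rfl
      map_smul' := fun c w => rfl }
  map_one' := by
    apply LinearMap.ext; intro w; funext m
    simp
  map_mul' := fun μ ν => by
    apply LinearMap.ext; intro w; funext m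
    exact congrArg w (add_assoc m (Multiplicative.toAdd μ) (Multiplicative.toAdd ν)).symm

/-- The action of `B` on `ℂ^{ℤⁿ}` by shifts, as a `ℂ`-algebra homomorphism into
the endomorphism algebra. -/
def shiftAlgHom (n : ℕ) :
    LaurentB n →ₐ[ℂ] Module.End ℂ ((Fin n → ℤ) → ℂ) :=
  AddMonoidAlgebra.lift ℂ _ (Fin n → ℤ) (shiftEnd n)

/-- `ℂ^{ℤⁿ}` as a module over the Laurent polynomial ring `B`, with `B` acting by shifts. -/
instance shiftModule (n : ℕ) : Module (LaurentB n) ((Fin n → ℤ) → ℂ) :=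
  Module.compHom _ (shiftAlgHom n).toRingHom

/-- The `B`-module `ℂ^{ℤⁿ}` of all functions `ℤⁿ → ℂ`, with the Laurent polynomial ring `B`
acting by shifts, is an injective `B`-module: any homomorphism to `ℂ^{ℤⁿ}` extends along any
injective homomorphism. -/

theorem shiftModule_injective_module (n : ℕ) (hn : 0 < n)
    (M M' : Type*) [AddCommGroup M] [Module (LaurentB n) M]
    [AddCommGroup M'] [Module (LaurentB n) M']
    (ι : M →ₗ[LaurentB n] M') (hι : Function.Injective ι)
    (φ : M →ₗ[LaurentB n] ((Fin n → ℤ) → ℂ)) :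
    ∃ ψ : M' →ₗ[LaurentB n] ((Fin n → ℤ) → ℂ), ∀ x : M, ψ (ι x) = φ x := by
  classical
  letI : Module ℂ M := Module.compHom M (algebraMap ℂ (LaurentB n))
  letI : Module ℂ M' := Module.compHom M' (algebraMap ℂ (LaurentB n))
  -- key computation: action of a single monomial on a function
  have key : ∀ (a : Fin n → ℤ) (c : ℂ) (w : (Fin n → ℤ) → ℂ) (m : Fin n → ℤ),
      ((AddMonoidAlgebra.single a c : LaurentB n) • w) m = c * w (m + a) := by
    intro a c w m
    show (shiftAlgHom n (AddMonoidAlgebra.single a c) w) m = c * w (m + a)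
    rw [shiftAlgHom, AddMonoidAlgebra.lift_single]
    rfl
  have hsm : ∀ (c : ℂ) (x : M'), c • x = algebraMap ℂ (LaurentB n) c • x := fun _ _ => rfl
  let ι' : M →ₗ[ℂ] M' :=
    { toFun := ι
      map_add' := ι.map_add
      map_smul' := fun c x => ι.map_smul (algebraMap ℂ (LaurentB n) c) x }
  let f : M →ₗ[ℂ] ℂ :=
    { toFun := fun x => φ x 0
      map_add' := fun x y => by show φ (x + y) 0 = _; rw [map_add]; rfl
      map_smul' := fun c x => by
        show φ (algebraMap ℂ (LaurentB n) c • x) 0 = c * φ x 0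
        have halg : algebraMap ℂ (LaurentB n) c
            = (AddMonoidAlgebra.single (0 : Fin n → ℤ) c : LaurentB n) := by
          simp [Algebra.algebraMap_eq_smul_one, AddMonoidAlgebra.one_def,
            AddMonoidAlgebra.smul_single']
        rw [map_smul, halg, key]
        simp
      }
  obtain ⟨r, hr⟩ := ι'.exists_leftInverse_of_injective (by
    rw [LinearMap.ker_eq_bot]; exact hι)
  let g : M' →ₗ[ℂ] ℂ := f.comp r
  have hg : ∀ x : M, g (ι x) = φ x 0 := by
    intro x
    show f ((r ∘ₗ ι') x) = φ x 0
    rw [hr]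
    rfl
  refine ⟨{ toFun := fun x m => g ((AddMonoidAlgebra.single m (1 : ℂ) : LaurentB n) • x)
            map_add' := fun x y => by
              funext m; simp [smul_add]
            map_smul' := fun b x => by
              funext m
              show g ((AddMonoidAlgebra.single m (1:ℂ) : LaurentB n) • b • x)
                = (b • fun m => g ((AddMonoidAlgebra.single m (1:ℂ) : LaurentB n) • x)) m
              induction b using AddMonoidAlgebra.induction_linear with
              | zero => simp
              | add b₁ b₂ h₁ h₂ =>
                rw [add_smul, smul_add, map_add, h₁, h₂, add_smul]; rfl
              | single a c =>
                rw [key, ← mul_smul, AddMonoidAlgebra.single_mul_single, one_mul]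
                have : (AddMonoidAlgebra.single (m + a) c : LaurentB n)
                    = algebraMap ℂ (LaurentB n) c * AddMonoidAlgebra.single (m + a) (1:ℂ) := by
                  rw [Algebra.algebraMap_eq_smul_one, smul_mul_assoc, one_mul,
                    AddMonoidAlgebra.smul_single', mul_one]
                rw [this, mul_smul, ← hsm, map_smul]
                rfl }, ?_⟩
  intro x
  funext m
  show g ((AddMonoidAlgebra.single m (1:ℂ) : LaurentB n) • ι x) = φ x m
  rw [← map_smul, hg, map_smul, key, one_mul, zero_add]
end
end

section
/- The B-module ℂ^{ℤⁿ} of all functions w : ℤⁿ → ℂ, with B = ℂ[σ₁,σ₁⁻¹,…,σₙ,σₙ⁻¹] acting by shifts, is a cogenerator: for every B-module M and every nonzero element m ∈ M, there exists a B-module homomorphism φ : M → ℂ^{ℤⁿ} with φ(m) ≠ 0; in particular, if Hom_B(M, ℂ^{ℤⁿ}) = 0 then M = 0. -/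
noncomputable section

/-- The `B`-module `ℂ^{ℤⁿ}` of all functions `ℤⁿ → ℂ`, with the Laurent polynomial ring `B`
acting by shifts, is a cogenerator: every nonzero element of any `B`-module is detected by
some homomorphism into `ℂ^{ℤⁿ}`. -/
theorem shiftModule_cogenerator (n : ℕ) (hn : 0 < n)
    (M : Type*) [AddCommGroup M] [Module (LaurentB n) M]
    (m : M) (hm : m ≠ 0) :
    ∃ φ : M →ₗ[LaurentB n] ((Fin n → ℤ) → ℂ), φ m ≠ 0 := by
  letI : Module ℂ M := Module.compHom M (algebraMap ℂ (LaurentB n))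
  have hsmul : ∀ (c : ℂ) (x : M), (c • x : M) = (algebraMap ℂ (LaurentB n) c) • x :=
    fun c x => rfl
  have hdual : ∃ f : Module.Dual ℂ M, f m ≠ 0 := by
    by_contra h
    push_neg at h
    exact hm ((Module.forall_dual_apply_eq_zero_iff ℂ m).mp h)
  obtain ⟨f, hf⟩ := hdual
  have hact : ∀ (b : LaurentB n) (w : (Fin n → ℤ) → ℂ), b • w = shiftAlgHom n b w :=
    fun b w => rfl
  set φ₀ : M → ((Fin n → ℤ) → ℂ) := fun x k => f (AddMonoidAlgebra.single k (1:ℂ) • x)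
    with hφ₀
  have haddφ : ∀ x y, φ₀ (x + y) = φ₀ x + φ₀ y := by
    intro x y; funext k; simp [hφ₀, smul_add]
  have hsing : ∀ (μ : Fin n → ℤ) (c : ℂ) (x : M),
      φ₀ ((AddMonoidAlgebra.single μ c : LaurentB n) • x)
        = (AddMonoidAlgebra.single μ c : LaurentB n) • φ₀ x := by
    intro μ c x; funext k
    have h1 : AddMonoidAlgebra.single k (1:ℂ) • ((AddMonoidAlgebra.single μ c : LaurentB n) • x)
        = (AddMonoidAlgebra.single (k + μ) c : LaurentB n) • x := by
      rw [← mul_smul, AddMonoidAlgebra.single_mul_single, one_mul]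
    have halg : algebraMap ℂ (LaurentB n) c
        = (AddMonoidAlgebra.single (0 : Fin n → ℤ) c : LaurentB n) := by
      rw [AddMonoidAlgebra.coe_algebraMap]
      simp
    have h3 : (AddMonoidAlgebra.single (k + μ) c : LaurentB n) • x
        = c • ((AddMonoidAlgebra.single (k + μ) (1:ℂ) : LaurentB n) • x) := by
      rw [hsmul, ← mul_smul, halg, AddMonoidAlgebra.single_mul_single, zero_add, mul_one]
    have hrhs : ((AddMonoidAlgebra.single μ c : LaurentB n) • φ₀ x) k
        = c * φ₀ x (k + μ) := by
      rw [hact, shiftAlgHom, AddMonoidAlgebra.lift_single]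
      rfl
    show f (AddMonoidAlgebra.single k (1:ℂ) • ((AddMonoidAlgebra.single μ c : LaurentB n) • x))
        = ((AddMonoidAlgebra.single μ c : LaurentB n) • φ₀ x) k
    rw [h1, h3, map_smul, hrhs]
    rfl
  have hmul : ∀ (b : LaurentB n) (x : M), φ₀ (b • x) = b • φ₀ x := by
    intro b x
    let toB : LaurentB n → LaurentB n := fun z => z
    induction b using AddMonoidAlgebra.induction_linear with
    | zero =>
        show φ₀ ((0 : LaurentB n) • x) = (0 : LaurentB n) • φ₀ x
        rw [zero_smul, zero_smul]
        funext k; simp [hφ₀]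
    | add p q hp hq =>
        show φ₀ ((toB p + toB q) • x) = (toB p + toB q) • φ₀ x
        rw [add_smul, haddφ, add_smul]
        exact congrArg₂ (· + ·) hp hq
    | single μ c =>
        show φ₀ ((AddMonoidAlgebra.single μ c : LaurentB n) • x)
            = (AddMonoidAlgebra.single μ c : LaurentB n) • φ₀ x
        exact hsing μ c x
  refine ⟨{ toFun := φ₀, map_add' := haddφ, map_smul' := hmul }, ?_⟩
  intro h
  apply hf
  have h0 := congrFun h 0
  have hone : (AddMonoidAlgebra.single (0 : Fin n → ℤ) (1:ℂ) : LaurentB n) • m = m := by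
    have : (AddMonoidAlgebra.single (0 : Fin n → ℤ) (1:ℂ) : LaurentB n) = 1 := rfl
    rw [this, one_smul]
  simpa [hφ₀, hone] using h0
end
end
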